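/- Let q be a prime power with q = 4 or q ≥ 7, and let ρ ≥ 0 be an integer. Then the set S_ρ of Construction S is a minimal ρ-saturating set of size (ρ+1)q+1 in PG(2ρ+1, q). -/

import Mathlib

set_option linter.unusedVariables false
set_option maxHeartbeats 1000000

/-- `v` is a linear combination of at most `k` vectors of the set `S`. -/
def IsCombOfAtMost {F : Type} [Field F] {d : ℕ} (S : Set (Fin d → F)) (k : ℕ)
    (v : Fin d → F) : Prop :=
  ∃ (t : Finset (Fin d → F)) (c : (Fin d → F) → F),
    ↑t ⊆ S ∧ t.card ≤ k ∧ v = ∑ w ∈ t, c w • w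

/-- Every point of `PG(d-1,q)` (i.e. every nonzero vector of `F_q^d`) is a
linear combination of at most `k` vectors of `S`. -/
def SaturatesWithin {F : Type} [Field F] {d : ℕ} (S : Set (Fin d → F)) (k : ℕ) : Prop :=
  ∀ v : Fin d → F, v ≠ 0 → IsCombOfAtMost S k v

/-- `S` is a `ρ`-saturating set: every point is a linear combination of at most
`ρ+1` points of `S`, and `ρ` is the smallest value with this property. -/
def IsSaturatingSet {F : Type} [Field F] {d : ℕ} (S : Set (Fin d → F)) (ρ : ℕ) : Prop :=
  SaturatesWithin S (ρ + 1) ∧ ∀ k < ρ + 1, ¬ SaturatesWithin S k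

/-- `S` is a minimal `ρ`-saturating set: no proper subset of `S` is `ρ`-saturating. -/
def IsMinimalSaturatingSet {F : Type} [Field F] {d : ℕ} (S : Set (Fin d → F)) (ρ : ℕ) : Prop :=
  IsSaturatingSet S ρ ∧ ∀ S' ⊂ S, ¬ IsSaturatingSet S' ρ

/-- The unit vector of `F^N` whose only nonzero coordinate is a `1` in
position `k` (positions numbered from `0`). -/
def unitV (F : Type) [Field F] (N k : ℕ) : Fin N → F :=
  fun i => if (i : ℕ) = k then 1 else 0

/-- Construction S ("Line+Ovals") in `PG(2ρ+1,q)`: the point `A₀⁰ = (1,0,…,0)`,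
the truncated line `L₀* = {(1,a,0,…,0) : a ≠ 0}`, for each `u = 1,…,ρ` the
truncated conic `C_u*` (with `1` in position `2u-1`, `a` in position `2u`,
`a²` in position `2u+1`) and the point `T_u` (a `1` in position `2u`), and the
point `A_ρ^∞ = (0,…,0,1)`. -/
def constructionS (F : Type) [Field F] (ρ : ℕ) : Set (Fin (2 * ρ + 2) → F) :=
  {unitV F (2 * ρ + 2) 0}
  ∪ {w | ∃ a : F, a ≠ 0 ∧
      w = fun i : Fin (2 * ρ + 2) => if (i : ℕ) = 0 then 1 else if (i : ℕ) = 1 then a else 0}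
  ∪ {w | ∃ u : ℕ, 1 ≤ u ∧ u ≤ ρ ∧ ∃ a : F, a ≠ 0 ∧
      w = fun i : Fin (2 * ρ + 2) => if (i : ℕ) = 2 * u - 1 then 1 else if (i : ℕ) = 2 * u then a
            else if (i : ℕ) = 2 * u + 1 then a ^ 2 else 0}
  ∪ {w | ∃ u : ℕ, 1 ≤ u ∧ u ≤ ρ ∧ w = unitV F (2 * ρ + 2) (2 * u)}
  ∪ {unitV F (2 * ρ + 2) (2 * ρ + 1)}

namespace Stmt10Aux

variable {F : Type} [Field F] {ρ : ℕ}

/-- Line point `(1,a,0,…,0)`. -/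
def ptL (ρ : ℕ) (a : F) : Fin (2 * ρ + 2) → F :=
  fun i => if (i : ℕ) = 0 then 1 else if (i : ℕ) = 1 then a else 0

/-- Conic point of level `u`. -/
def ptC (ρ u : ℕ) (a : F) : Fin (2 * ρ + 2) → F :=
  fun i => if (i : ℕ) = 2 * u - 1 then 1 else if (i : ℕ) = 2 * u then a
            else if (i : ℕ) = 2 * u + 1 then a ^ 2 else 0

lemma mem_A0 : unitV F (2 * ρ + 2) 0 ∈ constructionS F ρ :=
  Or.inl (Or.inl (Or.inl (Or.inl rfl)))

lemma mem_L {a : F} (ha : a ≠ 0) : ptL ρ a ∈ constructionS F ρ :=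
  Or.inl (Or.inl (Or.inl (Or.inr ⟨a, ha, rfl⟩)))

lemma mem_C {u : ℕ} (h1 : 1 ≤ u) (h2 : u ≤ ρ) {a : F} (ha : a ≠ 0) :
    ptC ρ u a ∈ constructionS F ρ :=
  Or.inl (Or.inl (Or.inr ⟨u, h1, h2, a, ha, rfl⟩))

lemma mem_T {u : ℕ} (h1 : 1 ≤ u) (h2 : u ≤ ρ) :
    unitV F (2 * ρ + 2) (2 * u) ∈ constructionS F ρ :=
  Or.inl (Or.inr ⟨u, h1, h2, rfl⟩)

lemma mem_I : unitV F (2 * ρ + 2) (2 * ρ + 1) ∈ constructionS F ρ :=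
  Or.inr rfl

lemma mem_elim {w : Fin (2 * ρ + 2) → F} (hw : w ∈ constructionS F ρ) :
    w = unitV F (2 * ρ + 2) 0 ∨ (∃ a : F, a ≠ 0 ∧ w = ptL ρ a) ∨
    (∃ u : ℕ, 1 ≤ u ∧ u ≤ ρ ∧ ∃ a : F, a ≠ 0 ∧ w = ptC ρ u a) ∨
    (∃ u : ℕ, 1 ≤ u ∧ u ≤ ρ ∧ w = unitV F (2 * ρ + 2) (2 * u)) ∨
    w = unitV F (2 * ρ + 2) (2 * ρ + 1) := by
  rcases hw with ((((h | h) | h) | h) | h)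
  · exact Or.inl h
  · exact Or.inr (Or.inl h)
  · exact Or.inr (Or.inr (Or.inl h))
  · exact Or.inr (Or.inr (Or.inr (Or.inl h)))
  · exact Or.inr (Or.inr (Or.inr (Or.inr h)))

/-! ### Support lemmas -/

lemma supp_unitV {k : ℕ} {i : Fin (2 * ρ + 2)} (h : unitV F (2 * ρ + 2) k i ≠ 0) :
    (i : ℕ) = k := by
  by_contra hc; exact h (if_neg hc)

lemma supp_L {a : F} {i : Fin (2 * ρ + 2)} (h : ptL ρ a i ≠ 0) : (i : ℕ) ≤ 1 := by
  by_contra hc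
  exact h (by simp only [ptL]; rw [if_neg (by omega), if_neg (by omega)])

lemma supp_C {u : ℕ} {a : F} {i : Fin (2 * ρ + 2)} (h : ptC ρ u a i ≠ 0) :
    2 * u - 1 ≤ (i : ℕ) ∧ (i : ℕ) ≤ 2 * u + 1 := by
  by_contra hc
  have h1 : (i : ℕ) ≠ 2 * u - 1 := by omega
  have h2 : (i : ℕ) ≠ 2 * u := by omega
  have h3 : (i : ℕ) ≠ 2 * u + 1 := by omega
  exact h (by simp only [ptC]; rw [if_neg h1, if_neg h2, if_neg h3])

/-- Every point of the construction has at most one nonzero "even" coordinate,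
and that even index is its level. -/
lemma level_unique {w : Fin (2 * ρ + 2) → F} (hw : w ∈ constructionS F ρ)
    {u u' : ℕ} (hu : u ≤ ρ) (hu' : u' ≤ ρ)
    {i i' : Fin (2 * ρ + 2)} (hi : (i : ℕ) = 2 * u) (hi' : (i' : ℕ) = 2 * u')
    (h : w i ≠ 0) (h' : w i' ≠ 0) : u = u' := by
  rcases mem_elim hw with h0 | ⟨a, ha, hl⟩ | ⟨v, hv1, hv2, a, ha, hc⟩ | ⟨v, hv1, hv2, ht⟩ | hI
  · have := supp_unitV (h0 ▸ h); have := supp_unitV (h0 ▸ h'); omega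
  · have := supp_L (hl ▸ h); have := supp_L (hl ▸ h'); omega
  · have := supp_C (hc ▸ h); have := supp_C (hc ▸ h'); omega
  · have := supp_unitV (ht ▸ h); have := supp_unitV (ht ▸ h'); omega
  · have := supp_unitV (hI ▸ h); have := supp_unitV (hI ▸ h'); omega

/-! ### Coordinate evaluation -/

def pos (ρ j : ℕ) : Fin (2 * ρ + 2) := ⟨min j (2 * ρ + 1), by omega⟩

lemma pos_val {j : ℕ} (h : j ≤ 2 * ρ + 1) : ((pos ρ j : Fin (2 * ρ + 2)) : ℕ) = j := by
  simp only [pos]; omega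

lemma ptC_apply (u : ℕ) (a : F) (i : Fin (2 * ρ + 2)) :
    ptC ρ u a i = if (i : ℕ) = 2 * u - 1 then 1 else if (i : ℕ) = 2 * u then a
            else if (i : ℕ) = 2 * u + 1 then a ^ 2 else 0 := rfl

lemma unitV_apply (k : ℕ) (i : Fin (2 * ρ + 2)) :
    unitV F (2 * ρ + 2) k i = if (i : ℕ) = k then 1 else 0 := rfl

lemma ptL_apply (a : F) (i : Fin (2 * ρ + 2)) :
    ptL ρ a i = if (i : ℕ) = 0 then 1 else if (i : ℕ) = 1 then a else 0 := rfl

lemma ptC_at1 {u : ℕ} (hu1 : 1 ≤ u) (hu2 : u ≤ ρ) (a : F) :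
    ptC ρ u a (pos ρ (2 * u - 1)) = 1 := by
  have h := pos_val (ρ := ρ) (j := 2 * u - 1) (by omega)
  rw [ptC_apply, if_pos h]

lemma ptC_at2 {u : ℕ} (hu1 : 1 ≤ u) (hu2 : u ≤ ρ) (a : F) :
    ptC ρ u a (pos ρ (2 * u)) = a := by
  have h := pos_val (ρ := ρ) (j := 2 * u) (by omega)
  rw [ptC_apply, if_neg (by omega), if_pos h]

lemma ptC_at3 {u : ℕ} (hu1 : 1 ≤ u) (hu2 : u ≤ ρ) (a : F) :
    ptC ρ u a (pos ρ (2 * u + 1)) = a ^ 2 := by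
  have h := pos_val (ρ := ρ) (j := 2 * u + 1) (by omega)
  rw [ptC_apply, if_neg (by omega), if_neg (by omega), if_pos h]

lemma ptT_at1 {u : ℕ} (hu1 : 1 ≤ u) (hu2 : u ≤ ρ) :
    unitV F (2 * ρ + 2) (2 * u) (pos ρ (2 * u - 1)) = 0 := by
  have h := pos_val (ρ := ρ) (j := 2 * u - 1) (by omega)
  rw [unitV_apply, if_neg (by omega)]

lemma ptT_at2 {u : ℕ} (hu1 : 1 ≤ u) (hu2 : u ≤ ρ) :
    unitV F (2 * ρ + 2) (2 * u) (pos ρ (2 * u)) = 1 := by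
  have h := pos_val (ρ := ρ) (j := 2 * u) (by omega)
  rw [unitV_apply, if_pos h]

lemma ptT_at3 {u : ℕ} (hu1 : 1 ≤ u) (hu2 : u ≤ ρ) :
    unitV F (2 * ρ + 2) (2 * u) (pos ρ (2 * u + 1)) = 0 := by
  have h := pos_val (ρ := ρ) (j := 2 * u + 1) (by omega)
  rw [unitV_apply, if_neg (by omega)]

lemma ptC_ne_ptC {u : ℕ} (hu1 : 1 ≤ u) (hu2 : u ≤ ρ) {a b : F} (hab : a ≠ b) :
    ptC ρ u a ≠ ptC ρ u b := by
  intro h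
  have := congrFun h (pos ρ (2 * u))
  rw [ptC_at2 hu1 hu2, ptC_at2 hu1 hu2] at this
  exact hab this

lemma ptC_ne_ptT {u : ℕ} (hu1 : 1 ≤ u) (hu2 : u ≤ ρ) (a : F) :
    ptC ρ u a ≠ unitV F (2 * ρ + 2) (2 * u) := by
  intro h
  have := congrFun h (pos ρ (2 * u - 1))
  rw [ptC_at1 hu1 hu2, ptT_at1 hu1 hu2] at this
  exact one_ne_zero this

/-! ### The representability predicate -/

/-- The residual target vector: `d` at coordinate `2u-1`, the tail of `v` above it. -/
def tgt (v : Fin (2 * ρ + 2) → F) (u : ℕ) (d : F) : Fin (2 * ρ + 2) → F :=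
  fun i => if (i : ℕ) < 2 * u - 1 then 0 else if (i : ℕ) = 2 * u - 1 then d else v i

def Rep (v : Fin (2 * ρ + 2) → F) (u n : ℕ) (d : F) : Prop :=
  ∃ (t : Finset (Fin (2 * ρ + 2) → F)) (c : (Fin (2 * ρ + 2) → F) → F),
    ↑t ⊆ constructionS F ρ ∧
    (∀ w ∈ t, ∀ i : Fin (2 * ρ + 2), (i : ℕ) < 2 * u - 1 → w i = 0) ∧
    t.card ≤ n ∧ (∑ w ∈ t, c w • w) = tgt v u d

lemma tgt_apply (v : Fin (2 * ρ + 2) → F) (u : ℕ) (d : F) (i : Fin (2 * ρ + 2)) :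
    tgt v u d i = if (i : ℕ) < 2 * u - 1 then 0 else if (i : ℕ) = 2 * u - 1 then d else v i :=
  rfl

lemma Rep.mono {v : Fin (2 * ρ + 2) → F} {u n n' : ℕ} {d : F} (h : Rep v u n d)
    (hn : n ≤ n') : Rep v u n' d := by
  obtain ⟨t, c, h1, h2, h3, h4⟩ := h
  exact ⟨t, c, h1, h2, le_trans h3 hn, h4⟩

lemma rep_base (v : Fin (2 * ρ + 2) → F) (d : F) : Rep v (ρ + 1) 1 d := by
  classical
  refine ⟨{unitV F (2 * ρ + 2) (2 * ρ + 1)}, fun _ => d, ?_, ?_, ?_, ?_⟩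
  · intro w hw
    rw [Finset.coe_singleton, Set.mem_singleton_iff] at hw
    rw [hw]; exact mem_I
  · intro w hw i hi
    rw [Finset.mem_singleton] at hw
    rw [hw, unitV_apply, if_neg (by omega)]
  · simp
  · rw [Finset.sum_singleton]
    funext i
    rw [Pi.smul_apply, unitV_apply, tgt_apply, smul_eq_mul]
    rcases lt_or_ge (i : ℕ) (2 * (ρ + 1) - 1) with hi | hi
    · rw [if_neg (by omega), mul_zero, if_pos (by omega)]
    · have : (i : ℕ) = 2 * ρ + 1 := by have := i.isLt; omega
      rw [if_pos (by omega), mul_one, if_neg (by omega), if_pos (by omega)]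

lemma rep_base0 (v : Fin (2 * ρ + 2) → F) : Rep v (ρ + 1) 0 0 := by
  classical
  refine ⟨∅, fun _ => 0, by simp, by simp, by simp, ?_⟩
  rw [Finset.sum_empty]
  funext i
  rw [tgt_apply]
  rcases lt_or_ge (i : ℕ) (2 * (ρ + 1) - 1) with hi | hi
  · rw [if_pos (by omega)]; rfl
  · have : (i : ℕ) = 2 * ρ + 1 := by have := i.isLt; omega
    rw [if_neg (by omega), if_pos (by omega)]; rfl

/-- Master step lemma: insert a batch of level-`u` points on top of a level-`u+1`
representation. -/
lemma rep_step {v : Fin (2 * ρ + 2) → F} {u n : ℕ} (hu1 : 1 ≤ u) (hu2 : u ≤ ρ) {d' : F}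
    (h : Rep v (u + 1) n d')
    (p : Finset (Fin (2 * ρ + 2) → F)) (γ : (Fin (2 * ρ + 2) → F) → F) (d : F)
    (hpS : ↑p ⊆ constructionS F ρ)
    (hlow : ∀ w ∈ p, ∃ j : Fin (2 * ρ + 2), (j : ℕ) < 2 * u + 1 ∧ w j ≠ 0)
    (hsupp : ∀ w ∈ p, ∀ i : Fin (2 * ρ + 2), (i : ℕ) < 2 * u - 1 → w i = 0)
    (hhigh : ∀ w ∈ p, ∀ i : Fin (2 * ρ + 2), 2 * u + 1 < (i : ℕ) → w i = 0)
    (h1 : ∑ w ∈ p, γ w * w (pos ρ (2 * u - 1)) = d)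
    (h2 : ∑ w ∈ p, γ w * w (pos ρ (2 * u)) = v (pos ρ (2 * u)))
    (h3 : ∑ w ∈ p, γ w * w (pos ρ (2 * u + 1)) = v (pos ρ (2 * u + 1)) - d') :
    Rep v u (n + p.card) d := by
  classical
  obtain ⟨t, c, htS, htsupp, htcard, htsum⟩ := h
  have hdisj : Disjoint p t := by
    rw [Finset.disjoint_left]
    intro w hwp hwt
    obtain ⟨j, hj, hjne⟩ := hlow w hwp
    exact hjne (htsupp w hwt j (by omega))
  refine ⟨p ∪ t, fun w => if w ∈ p then γ w else c w, ?_, ?_, ?_, ?_⟩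
  · rw [Finset.coe_union]
    exact Set.union_subset hpS htS
  · intro w hw i hi
    rcases Finset.mem_union.mp hw with hw | hw
    · exact hsupp w hw i hi
    · exact htsupp w hw i (by omega)
  · calc (p ∪ t).card ≤ p.card + t.card := Finset.card_union_le _ _
      _ ≤ n + p.card := by omega
  · rw [Finset.sum_union hdisj]
    have e1 : ∑ w ∈ p, (if w ∈ p then γ w else c w) • w = ∑ w ∈ p, γ w • w :=
      Finset.sum_congr rfl (fun w hw => by rw [if_pos hw])
    have e2 : ∑ w ∈ t, (if w ∈ p then γ w else c w) • w = ∑ w ∈ t, c w • w :=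
      Finset.sum_congr rfl (fun w hw => by rw [if_neg (Finset.disjoint_right.mp hdisj hw)])
    rw [e1, e2, htsum]
    funext i
    rw [Pi.add_apply]
    have hsum : (∑ w ∈ p, γ w • w) i = ∑ w ∈ p, γ w * w i := by
      rw [Finset.sum_apply]
      exact Finset.sum_congr rfl (fun w _ => by rw [Pi.smul_apply, smul_eq_mul])
    have hlt := i.isLt
    by_cases hA : (i : ℕ) < 2 * u - 1
    · have hz : ∑ w ∈ p, γ w * w i = 0 :=
        Finset.sum_eq_zero (fun w hw => by rw [hsupp w hw i hA, mul_zero])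
      rw [hsum, hz, tgt_apply, tgt_apply, if_pos hA, if_pos (by omega)]
      ring
    · by_cases hB : (i : ℕ) = 2 * u - 1
      · have hip : i = pos ρ (2 * u - 1) := Fin.ext (by rw [pos_val (by omega)]; exact hB)
        rw [hsum, hip, h1, tgt_apply, tgt_apply, pos_val (by omega)]
        rw [if_pos (by omega), if_neg (by omega), if_pos (by omega)]
        ring
      · by_cases hC : (i : ℕ) = 2 * u
        · have hip : i = pos ρ (2 * u) := Fin.ext (by rw [pos_val (by omega)]; exact hC)
          rw [hsum, hip, h2, tgt_apply, tgt_apply, pos_val (by omega)]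
          rw [if_pos (by omega), if_neg (by omega), if_neg (by omega)]
          ring
        · by_cases hD : (i : ℕ) = 2 * u + 1
          · have hip : i = pos ρ (2 * u + 1) := Fin.ext (by rw [pos_val (by omega)]; exact hD)
            rw [hsum, hip, h3, tgt_apply, tgt_apply, pos_val (by omega)]
            rw [if_neg (by omega), if_pos (by omega), if_neg (by omega), if_neg (by omega)]
            ring
          · have hE : 2 * u + 1 < (i : ℕ) := by omega
            have hz : ∑ w ∈ p, γ w * w i = 0 :=
              Finset.sum_eq_zero (fun w hw => by rw [hhigh w hw i hE, mul_zero])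
            rw [hsum, hz, tgt_apply, tgt_apply]
            rw [if_neg (by omega), if_neg (by omega), if_neg (by omega), if_neg (by omega)]
            ring

/-! ### Support bounds for level-`u` points -/

lemma suppC_low {u : ℕ} (a : F) : ∀ i : Fin (2 * ρ + 2), (i : ℕ) < 2 * u - 1 → ptC ρ u a i = 0 := by
  intro i hi
  rw [ptC_apply, if_neg (by omega), if_neg (by omega), if_neg (by omega)]

lemma suppC_high {u : ℕ} (a : F) :
    ∀ i : Fin (2 * ρ + 2), 2 * u + 1 < (i : ℕ) → ptC ρ u a i = 0 := by
  intro i hi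
  rw [ptC_apply, if_neg (by omega), if_neg (by omega), if_neg (by omega)]

lemma suppT_low {u : ℕ} :
    ∀ i : Fin (2 * ρ + 2), (i : ℕ) < 2 * u - 1 → unitV F (2 * ρ + 2) (2 * u) i = 0 := by
  intro i hi; rw [unitV_apply, if_neg (by omega)]

lemma suppT_high {u : ℕ} :
    ∀ i : Fin (2 * ρ + 2), 2 * u + 1 < (i : ℕ) → unitV F (2 * ρ + 2) (2 * u) i = 0 := by
  intro i hi; rw [unitV_apply, if_neg (by omega)]

/-! ### Step lemmas for specific point batches -/

/-- Insert the single point `T_u`. -/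
lemma step_T {v : Fin (2 * ρ + 2) → F} {u n : ℕ} (hu1 : 1 ≤ u) (hu2 : u ≤ ρ)
    (h : Rep v (u + 1) n (v (pos ρ (2 * u + 1)))) : Rep v u (n + 1) 0 := by
  classical
  have := rep_step hu1 hu2 h {unitV F (2 * ρ + 2) (2 * u)} (fun _ => v (pos ρ (2 * u))) 0
    (by intro w hw
        rw [Finset.coe_singleton, Set.mem_singleton_iff] at hw
        rw [hw]; exact mem_T hu1 hu2)
    (by intro w hw
        rw [Finset.mem_singleton] at hw
        exact ⟨pos ρ (2 * u), by rw [pos_val (by omega)]; omega, by rw [hw, ptT_at2 hu1 hu2]; exact one_ne_zero⟩)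
    (by intro w hw; rw [Finset.mem_singleton] at hw; rw [hw]; exact suppT_low)
    (by intro w hw; rw [Finset.mem_singleton] at hw; rw [hw]; exact suppT_high)
    (by rw [Finset.sum_singleton, ptT_at1 hu1 hu2, mul_zero])
    (by rw [Finset.sum_singleton, ptT_at2 hu1 hu2, mul_one])
    (by rw [Finset.sum_singleton, ptT_at3 hu1 hu2, mul_zero, sub_self])
  simpa using this

/-- Insert the single conic point `C_u(a)`. -/
lemma step_C {v : Fin (2 * ρ + 2) → F} {u n : ℕ} (hu1 : 1 ≤ u) (hu2 : u ≤ ρ) {d' : F}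
    (a γ : F) (ha : a ≠ 0)
    (h2 : γ * a = v (pos ρ (2 * u)))
    (h3 : γ * a ^ 2 = v (pos ρ (2 * u + 1)) - d')
    (h : Rep v (u + 1) n d') : Rep v u (n + 1) γ := by
  classical
  have := rep_step hu1 hu2 h {ptC ρ u a} (fun _ => γ) γ
    (by intro w hw
        rw [Finset.coe_singleton, Set.mem_singleton_iff] at hw
        rw [hw]; exact mem_C hu1 hu2 ha)
    (by intro w hw
        rw [Finset.mem_singleton] at hw
        exact ⟨pos ρ (2 * u - 1), by rw [pos_val (by omega)]; omega,
          by rw [hw, ptC_at1 hu1 hu2]; exact one_ne_zero⟩)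
    (by intro w hw; rw [Finset.mem_singleton] at hw; rw [hw]; exact suppC_low a)
    (by intro w hw; rw [Finset.mem_singleton] at hw; rw [hw]; exact suppC_high a)
    (by rw [Finset.sum_singleton, ptC_at1 hu1 hu2, mul_one])
    (by rw [Finset.sum_singleton, ptC_at2 hu1 hu2, h2])
    (by rw [Finset.sum_singleton, ptC_at3 hu1 hu2, h3])
  simpa using this

/-- Insert `C_u(a)` and `T_u`. -/
lemma step_CT {v : Fin (2 * ρ + 2) → F} {u n : ℕ} (hu1 : 1 ≤ u) (hu2 : u ≤ ρ) {d' : F}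
    (a γ τ : F) (ha : a ≠ 0)
    (h2 : γ * a + τ = v (pos ρ (2 * u)))
    (h3 : γ * a ^ 2 = v (pos ρ (2 * u + 1)) - d')
    (h : Rep v (u + 1) n d') : Rep v u (n + 2) γ := by
  classical
  set T := unitV F (2 * ρ + 2) (2 * u) with hT
  have hne : ptC ρ u a ≠ T := ptC_ne_ptT hu1 hu2 a
  have hnm : ptC ρ u a ∉ ({T} : Finset (Fin (2 * ρ + 2) → F)) := by
    rw [Finset.mem_singleton]; exact hne
  have hcard : ({ptC ρ u a, T} : Finset (Fin (2 * ρ + 2) → F)).card = 2 := by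
    rw [Finset.card_insert_of_notMem hnm, Finset.card_singleton]
  have hmem : ∀ w ∈ ({ptC ρ u a, T} : Finset (Fin (2 * ρ + 2) → F)),
      w = ptC ρ u a ∨ w = T := by
    intro w hw
    rcases Finset.mem_insert.mp hw with hw | hw
    · exact Or.inl hw
    · exact Or.inr (Finset.mem_singleton.mp hw)
  have := rep_step hu1 hu2 h {ptC ρ u a, T} (fun w => if w = ptC ρ u a then γ else τ) γ
    (by intro w hw
        rw [Finset.coe_insert, Set.mem_insert_iff, Finset.coe_singleton,
          Set.mem_singleton_iff] at hw
        rcases hw with hw | hw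
        · rw [hw]; exact mem_C hu1 hu2 ha
        · rw [hw, hT]; exact mem_T hu1 hu2)
    (by intro w hw
        rcases hmem w hw with hw | hw
        · exact ⟨pos ρ (2 * u - 1), by rw [pos_val (by omega)]; omega,
            by rw [hw, ptC_at1 hu1 hu2]; exact one_ne_zero⟩
        · exact ⟨pos ρ (2 * u), by rw [pos_val (by omega)]; omega,
            by rw [hw, hT, ptT_at2 hu1 hu2]; exact one_ne_zero⟩)
    (by intro w hw i hi
        rcases hmem w hw with hw | hw
        · rw [hw]; exact suppC_low a i hi
        · rw [hw, hT]; exact suppT_low i hi)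
    (by intro w hw i hi
        rcases hmem w hw with hw | hw
        · rw [hw]; exact suppC_high a i hi
        · rw [hw, hT]; exact suppT_high i hi)
    (by rw [Finset.sum_insert hnm, Finset.sum_singleton]; beta_reduce; rw [if_pos rfl, if_neg (Ne.symm hne),
          ptC_at1 hu1 hu2, hT, ptT_at1 hu1 hu2, mul_one, mul_zero, add_zero])
    (by rw [Finset.sum_insert hnm, Finset.sum_singleton]; beta_reduce; rw [if_pos rfl, if_neg (Ne.symm hne),
          ptC_at2 hu1 hu2, hT, ptT_at2 hu1 hu2, mul_one, h2])
    (by rw [Finset.sum_insert hnm, Finset.sum_singleton]; beta_reduce; rw [if_pos rfl, if_neg (Ne.symm hne),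
          ptC_at3 hu1 hu2, hT, ptT_at3 hu1 hu2, mul_zero, add_zero, h3])
  rw [hcard] at this
  exact this

/-- Insert `C_u(a)` and `C_u(b)`, `a ≠ b`. -/
lemma step_CC {v : Fin (2 * ρ + 2) → F} {u n : ℕ} (hu1 : 1 ≤ u) (hu2 : u ≤ ρ) {d' : F}
    (a b γ₁ γ₂ : F) (ha : a ≠ 0) (hb : b ≠ 0) (hab : a ≠ b)
    (h2 : γ₁ * a + γ₂ * b = v (pos ρ (2 * u)))
    (h3 : γ₁ * a ^ 2 + γ₂ * b ^ 2 = v (pos ρ (2 * u + 1)) - d')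
    (h : Rep v (u + 1) n d') : Rep v u (n + 2) (γ₁ + γ₂) := by
  classical
  have hne : ptC ρ u a ≠ ptC ρ u b := ptC_ne_ptC hu1 hu2 hab
  have hnm : ptC ρ u a ∉ ({ptC ρ u b} : Finset (Fin (2 * ρ + 2) → F)) := by
    rw [Finset.mem_singleton]; exact hne
  have hcard : ({ptC ρ u a, ptC ρ u b} : Finset (Fin (2 * ρ + 2) → F)).card = 2 := by
    rw [Finset.card_insert_of_notMem hnm, Finset.card_singleton]
  have hmem : ∀ w ∈ ({ptC ρ u a, ptC ρ u b} : Finset (Fin (2 * ρ + 2) → F)),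
      w = ptC ρ u a ∨ w = ptC ρ u b := by
    intro w hw
    rcases Finset.mem_insert.mp hw with hw | hw
    · exact Or.inl hw
    · exact Or.inr (Finset.mem_singleton.mp hw)
  have := rep_step hu1 hu2 h {ptC ρ u a, ptC ρ u b}
    (fun w => if w = ptC ρ u a then γ₁ else γ₂) (γ₁ + γ₂)
    (by intro w hw
        rw [Finset.coe_insert, Set.mem_insert_iff, Finset.coe_singleton,
          Set.mem_singleton_iff] at hw
        rcases hw with hw | hw
        · rw [hw]; exact mem_C hu1 hu2 ha
        · rw [hw]; exact mem_C hu1 hu2 hb)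
    (by intro w hw
        rcases hmem w hw with hw | hw <;>
          exact ⟨pos ρ (2 * u - 1), by rw [pos_val (by omega)]; omega,
            by rw [hw, ptC_at1 hu1 hu2]; exact one_ne_zero⟩)
    (by intro w hw i hi
        rcases hmem w hw with hw | hw <;> (rw [hw]; exact suppC_low _ i hi))
    (by intro w hw i hi
        rcases hmem w hw with hw | hw <;> (rw [hw]; exact suppC_high _ i hi))
    (by rw [Finset.sum_insert hnm, Finset.sum_singleton]; beta_reduce; rw [if_pos rfl, if_neg (Ne.symm hne),
          ptC_at1 hu1 hu2, ptC_at1 hu1 hu2, mul_one, mul_one])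
    (by rw [Finset.sum_insert hnm, Finset.sum_singleton]; beta_reduce; rw [if_pos rfl, if_neg (Ne.symm hne),
          ptC_at2 hu1 hu2, ptC_at2 hu1 hu2, h2])
    (by rw [Finset.sum_insert hnm, Finset.sum_singleton]; beta_reduce; rw [if_pos rfl, if_neg (Ne.symm hne),
          ptC_at3 hu1 hu2, ptC_at3 hu1 hu2, h3])
  rw [hcard] at this
  exact this

/-- Insert `C_u(a)`, `C_u(b)` and `T_u`. -/
lemma step_CCT {v : Fin (2 * ρ + 2) → F} {u n : ℕ} (hu1 : 1 ≤ u) (hu2 : u ≤ ρ) {d' : F}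
    (a b γ₁ γ₂ τ : F) (ha : a ≠ 0) (hb : b ≠ 0) (hab : a ≠ b)
    (h2 : γ₁ * a + γ₂ * b + τ = v (pos ρ (2 * u)))
    (h3 : γ₁ * a ^ 2 + γ₂ * b ^ 2 = v (pos ρ (2 * u + 1)) - d')
    (h : Rep v (u + 1) n d') : Rep v u (n + 3) (γ₁ + γ₂) := by
  classical
  set T := unitV F (2 * ρ + 2) (2 * u) with hT
  have hne : ptC ρ u a ≠ ptC ρ u b := ptC_ne_ptC hu1 hu2 hab
  have hneaT : ptC ρ u a ≠ T := ptC_ne_ptT hu1 hu2 a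
  have hnebT : ptC ρ u b ≠ T := ptC_ne_ptT hu1 hu2 b
  have hnm1 : ptC ρ u b ∉ ({T} : Finset (Fin (2 * ρ + 2) → F)) := by
    rw [Finset.mem_singleton]; exact hnebT
  have hnm2 : ptC ρ u a ∉ ({ptC ρ u b, T} : Finset (Fin (2 * ρ + 2) → F)) := by
    rw [Finset.mem_insert, Finset.mem_singleton]
    push_neg
    exact ⟨hne, hneaT⟩
  have hcard : ({ptC ρ u a, ptC ρ u b, T} : Finset (Fin (2 * ρ + 2) → F)).card = 3 := by
    rw [Finset.card_insert_of_notMem hnm2, Finset.card_insert_of_notMem hnm1,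
      Finset.card_singleton]
  have hmem : ∀ w ∈ ({ptC ρ u a, ptC ρ u b, T} : Finset (Fin (2 * ρ + 2) → F)),
      w = ptC ρ u a ∨ w = ptC ρ u b ∨ w = T := by
    intro w hw
    rcases Finset.mem_insert.mp hw with hw | hw
    · exact Or.inl hw
    · rcases Finset.mem_insert.mp hw with hw | hw
      · exact Or.inr (Or.inl hw)
      · exact Or.inr (Or.inr (Finset.mem_singleton.mp hw))
  have := rep_step hu1 hu2 h {ptC ρ u a, ptC ρ u b, T}
    (fun w => if w = ptC ρ u a then γ₁ else if w = ptC ρ u b then γ₂ else τ) (γ₁ + γ₂)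
    (by intro w hw
        rw [Finset.coe_insert, Set.mem_insert_iff, Finset.coe_insert, Set.mem_insert_iff,
          Finset.coe_singleton, Set.mem_singleton_iff] at hw
        rcases hw with hw | hw | hw
        · rw [hw]; exact mem_C hu1 hu2 ha
        · rw [hw]; exact mem_C hu1 hu2 hb
        · rw [hw, hT]; exact mem_T hu1 hu2)
    (by intro w hw
        rcases hmem w hw with hw | hw | hw
        · exact ⟨pos ρ (2 * u - 1), by rw [pos_val (by omega)]; omega,
            by rw [hw, ptC_at1 hu1 hu2]; exact one_ne_zero⟩
        · exact ⟨pos ρ (2 * u - 1), by rw [pos_val (by omega)]; omega,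
            by rw [hw, ptC_at1 hu1 hu2]; exact one_ne_zero⟩
        · exact ⟨pos ρ (2 * u), by rw [pos_val (by omega)]; omega,
            by rw [hw, hT, ptT_at2 hu1 hu2]; exact one_ne_zero⟩)
    (by intro w hw i hi
        rcases hmem w hw with hw | hw | hw
        · rw [hw]; exact suppC_low _ i hi
        · rw [hw]; exact suppC_low _ i hi
        · rw [hw, hT]; exact suppT_low i hi)
    (by intro w hw i hi
        rcases hmem w hw with hw | hw | hw
        · rw [hw]; exact suppC_high _ i hi
        · rw [hw]; exact suppC_high _ i hi
        · rw [hw, hT]; exact suppT_high i hi)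
    (by rw [Finset.sum_insert hnm2, Finset.sum_insert hnm1, Finset.sum_singleton]; beta_reduce; rw [if_pos rfl, if_neg (Ne.symm hne), if_pos rfl, if_neg (Ne.symm hneaT),
          if_neg (Ne.symm hnebT), ptC_at1 hu1 hu2, ptC_at1 hu1 hu2, hT, ptT_at1 hu1 hu2,
          mul_one, mul_one, mul_zero, add_zero])
    (by rw [Finset.sum_insert hnm2, Finset.sum_insert hnm1, Finset.sum_singleton]; beta_reduce; rw [if_pos rfl, if_neg (Ne.symm hne), if_pos rfl, if_neg (Ne.symm hneaT),
          if_neg (Ne.symm hnebT), ptC_at2 hu1 hu2, ptC_at2 hu1 hu2, hT, ptT_at2 hu1 hu2,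
          mul_one, ← add_assoc, h2])
    (by rw [Finset.sum_insert hnm2, Finset.sum_insert hnm1, Finset.sum_singleton]; beta_reduce; rw [if_pos rfl, if_neg (Ne.symm hne), if_pos rfl, if_neg (Ne.symm hneaT),
          if_neg (Ne.symm hnebT), ptC_at3 hu1 hu2, ptC_at3 hu1 hu2, hT, ptT_at3 hu1 hu2,
          mul_zero, add_zero, h3])
  rw [hcard] at this
  exact this

/-- Do nothing at level `u` (only possible when `v (2u) = 0`). -/
lemma step_none {v : Fin (2 * ρ + 2) → F} {u n : ℕ} (hu1 : 1 ≤ u) (hu2 : u ≤ ρ)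
    (hs : v (pos ρ (2 * u)) = 0)
    (h : Rep v (u + 1) n (v (pos ρ (2 * u + 1)))) : Rep v u n 0 := by
  classical
  have := rep_step hu1 hu2 h ∅ (fun _ => 0) 0 (by simp) (by simp) (by simp) (by simp)
    (by rw [Finset.sum_empty]) (by rw [Finset.sum_empty]; exact hs.symm)
    (by rw [Finset.sum_empty, sub_self])
  simpa using this

/-! ### Field arithmetic helpers -/

section Arith
variable [Fintype F]

lemma exists_avoid (s : Finset F) (h : s.card < Fintype.card F) : ∃ a : F, a ∉ s := by
  by_contra hc
  push_neg at hc
  have hsub : (Finset.univ : Finset F) ⊆ s := fun a _ => hc a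
  have := Finset.card_le_card hsub
  rw [Finset.card_univ] at this
  omega

lemma card_ge_four {q : ℕ} (hF : Fintype.card F = q) (hq : q = 4 ∨ 7 ≤ q) :
    4 ≤ Fintype.card F := by omega

lemma exists_avoid3 {q : ℕ} (hF : Fintype.card F = q) (hq : q = 4 ∨ 7 ≤ q) (x y z : F) :
    ∃ a : F, a ≠ x ∧ a ≠ y ∧ a ≠ z := by
  classical
  have hb3 : ({x, y, z} : Finset F).card ≤ 3 := by
    have h2' := Finset.card_insert_le y ({z} : Finset F)
    have h3' := Finset.card_insert_le x (insert y ({z} : Finset F))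
    have h1' : ({z} : Finset F).card = 1 := Finset.card_singleton z
    omega
  obtain ⟨a, ha⟩ := exists_avoid ({x, y, z} : Finset F) (by omega)
  simp only [Finset.mem_insert, Finset.mem_singleton] at ha
  push_neg at ha
  exact ⟨a, ha.1, ha.2.1, ha.2.2⟩

/-- If `2 ≠ 0` in `F` then the cardinality is odd, hence `≥ 7` under our hypotheses. -/
lemma card_ge_seven {q : ℕ} (hF : Fintype.card F = q) (hq : q = 4 ∨ 7 ≤ q)
    (h2 : (2 : F) ≠ 0) : 7 ≤ Fintype.card F := by
  rcases hq with h | h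
  · exfalso
    have hc : ((Fintype.card F : ℕ) : F) = 0 := Nat.cast_card_eq_zero F
    rw [hF, h] at hc
    have : (2 : F) * 2 = 0 := by
      have : ((4 : ℕ) : F) = (2 : F) * 2 := by norm_num
      rw [← this, hc]
    exact h2 (by rcases mul_eq_zero.mp this with h' | h' <;> exact h')
  · omega

/-- In characteristic 2, squaring is surjective. -/
lemma sq_surjective (h2 : (2 : F) = 0) (y : F) : ∃ a : F, a ^ 2 = y := by
  have hinj : Function.Injective (fun a : F => a ^ 2) := by
    intro a b hab
    simp only at hab
    have : (a - b) ^ 2 = 0 := by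
      have : (a - b) ^ 2 = a ^ 2 - 2 * a * b + b ^ 2 := by ring
      rw [this, h2, hab]
      ring_nf
      rw [(by ring : b ^ 2 * 2 = 2 * b ^ 2), h2]
      ring
    have := pow_eq_zero_iff (n := 2) (by norm_num) |>.mp this
    exact sub_eq_zero.mp this
  have hsurj := Finite.surjective_of_injective hinj
  exact hsurj y

/-- A quadratic with nonzero leading coefficient has at most two roots; here packaged as:
we can avoid three given values and the roots of the quadratic, provided `card F ≥ 7`. -/
lemma exists_nonroot (hcard : 7 ≤ Fintype.card F) (x y z : F) {d e f : F} (hd : d ≠ 0) :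
    ∃ a : F, a ≠ x ∧ a ≠ y ∧ a ≠ z ∧ d * a ^ 2 + e * a + f ≠ 0 := by
  classical
  have hroots : (Finset.univ.filter (fun t : F => d * t ^ 2 + e * t + f = 0)).card ≤ 2 := by
    by_contra hcc
    push_neg at hcc
    obtain ⟨a, b, c, ha, hb, hc, hab, hac, hbc⟩ := Finset.two_lt_card_iff.mp hcc
    rw [Finset.mem_filter] at ha hb hc
    have ha' := ha.2; have hb' := hb.2; have hc' := hc.2
    have k1 : (a - b) * (d * (a + b) + e) = 0 := by linear_combination ha' - hb'
    have k2 : (a - c) * (d * (a + c) + e) = 0 := by linear_combination ha' - hc'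
    have m1 : d * (a + b) + e = 0 := by
      rcases mul_eq_zero.mp k1 with h' | h'
      · exact absurd (sub_eq_zero.mp h') hab
      · exact h'
    have m2 : d * (a + c) + e = 0 := by
      rcases mul_eq_zero.mp k2 with h' | h'
      · exact absurd (sub_eq_zero.mp h') hac
      · exact h'
    have : d * (b - c) = 0 := by linear_combination m1 - m2
    rcases mul_eq_zero.mp this with h' | h'
    · exact hd h'
    · exact hbc (sub_eq_zero.mp h')
  set bad := ({x, y, z} : Finset F) ∪
    Finset.univ.filter (fun t : F => d * t ^ 2 + e * t + f = 0) with hbad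
  have hb3 : ({x, y, z} : Finset F).card ≤ 3 := by
    have h2' := Finset.card_insert_le y ({z} : Finset F)
    have h3' := Finset.card_insert_le x (insert y ({z} : Finset F))
    have h1' : ({z} : Finset F).card = 1 := Finset.card_singleton z
    omega
  have hbc : bad.card ≤ 5 := le_trans (Finset.card_union_le _ _) (by omega)
  obtain ⟨a, ha⟩ := exists_avoid bad (by omega)
  rw [hbad, Finset.mem_union, Finset.mem_insert, Finset.mem_insert, Finset.mem_singleton,
    Finset.mem_filter] at ha
  push_neg at ha
  exact ⟨a, ha.1.1, ha.1.2.1, ha.1.2.2, ha.2 (Finset.mem_univ a)⟩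

end Arith

/-! ### Algebra for pairs of conic points -/

lemma CC_alg1 {α β s d : F} (hne : α ≠ β) :
    (s - d * β) / (α - β) * α + (d - (s - d * β) / (α - β)) * β = s := by
  have h0 : α - β ≠ 0 := sub_ne_zero.mpr hne
  field_simp
  ring

lemma CC_alg2 {α β s d y : F} (hne : α ≠ β) (key : s * (α + β) - d * (α * β) = y) :
    (s - d * β) / (α - β) * α ^ 2 + (d - (s - d * β) / (α - β)) * β ^ 2 = y := by
  have h0 : α - β ≠ 0 := sub_ne_zero.mpr hne
  field_simp
  linear_combination (α - β) * key

/-! ### Transition wrappers -/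

section Trans
variable [Fintype F] {q : ℕ}
variable {v : Fin (2 * ρ + 2) → F} {u n : ℕ} {d' : F}

/-- One conic point, forced parameters (needs `s ≠ 0`, `d' ≠ t`). -/
lemma wrap_C (hu1 : 1 ≤ u) (hu2 : u ≤ ρ) (hs : v (pos ρ (2 * u)) ≠ 0)
    (hdt : d' ≠ v (pos ρ (2 * u + 1))) (h : Rep v (u + 1) n d') :
    ∃ d, Rep v u (n + 1) d := by
  set s := v (pos ρ (2 * u)) with hsdef
  set t := v (pos ρ (2 * u + 1)) with htdef
  have hy : t - d' ≠ 0 := sub_ne_zero.mpr (Ne.symm hdt)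
  refine ⟨s ^ 2 / (t - d'), step_C hu1 hu2 ((t - d') / s) (s ^ 2 / (t - d')) ?_ ?_ ?_ h⟩
  · exact div_ne_zero hy hs
  · rw [← hsdef]
    field_simp
  · rw [← htdef]
    field_simp

/-- Full flexibility at a level with `s ≠ 0`: any outgoing debt, two extra points. -/
lemma wrap_F1 (hF : Fintype.card F = q) (hq : q = 4 ∨ 7 ≤ q)
    (hu1 : 1 ≤ u) (hu2 : u ≤ ρ) (hs : v (pos ρ (2 * u)) ≠ 0)
    (h : Rep v (u + 1) n d') (d : F) : Rep v u (n + 2) d := by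
  set s := v (pos ρ (2 * u)) with hsdef
  set t := v (pos ρ (2 * u + 1)) with htdef
  by_cases hd : d = 0
  · subst hd
    by_cases hdt : d' = t
    · subst hdt
      exact (step_T hu1 hu2 h).mono (by omega)
    · have hy : t - d' ≠ 0 := sub_ne_zero.mpr (Ne.symm hdt)
      have hμ : (t - d') / s ≠ 0 := div_ne_zero hy hs
      set μ := (t - d') / s with hμdef
      obtain ⟨α, hα0, hαμ, hα2⟩ : ∃ α : F, α ≠ 0 ∧ α ≠ μ ∧ 2 * α ≠ μ := by
        by_cases h2 : (2 : F) = 0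
        · obtain ⟨α, h1', h2', _⟩ := exists_avoid3 hF hq 0 μ μ
          exact ⟨α, h1', h2', by rw [h2, zero_mul]; exact Ne.symm hμ⟩
        · obtain ⟨α, h1', h2', h3'⟩ := exists_avoid3 hF hq 0 μ (μ / 2)
          refine ⟨α, h1', h2', fun hc => h3' ?_⟩
          rw [eq_div_iff h2]
          linear_combination hc
      set β := μ - α with hβdef
      have hβ0 : β ≠ 0 := sub_ne_zero.mpr (Ne.symm hαμ)
      have hαβ : α ≠ β := by
        intro hc
        exact hα2 (by rw [hβdef] at hc; linear_combination hc)
      have key : s * (α + β) - 0 * (α * β) = t - d' := by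
        rw [hβdef, hμdef]
        field_simp
        ring
      have hval : (s - 0 * β) / (α - β) + (0 - (s - 0 * β) / (α - β)) = 0 := by ring
      have := step_CC hu1 hu2 α β ((s - 0 * β) / (α - β)) (0 - (s - 0 * β) / (α - β))
        hα0 hβ0 hαβ (by rw [CC_alg1 hαβ]) (by rw [CC_alg2 hαβ key]) h
      rw [hval] at this
      exact this
  · by_cases h2 : (2 : F) = 0
    · by_cases hy : t - d' = 0
      · -- characteristic 2, y = 0 : two conic points
        obtain ⟨α, hα0, hαsd, _⟩ := exists_avoid3 hF hq 0 (s / d) (s / d)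
        have hden : d * α - s ≠ 0 := by
          intro hc
          exact hαsd (by rw [eq_div_iff hd]; linear_combination hc)
        set β := s * α / (d * α - s) with hβdef
        have hβ0 : β ≠ 0 := div_ne_zero (mul_ne_zero hs hα0) hden
        have hαβ : α ≠ β := by
          intro hc
          rw [hβdef, eq_div_iff hden] at hc
          have key2 : d * α ^ 2 = 2 * (s * α) := by linear_combination hc
          rw [h2, zero_mul] at key2
          exact mul_ne_zero hd (pow_ne_zero 2 hα0) key2
        have key : s * (α + β) - d * (α * β) = t - d' := by
          have e : β * (d * α - s) = s * α := by rw [hβdef]; exact div_mul_cancel₀ _ hden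
          rw [hy]
          linear_combination -e
        have hval : (s - d * β) / (α - β) + (d - (s - d * β) / (α - β)) = d := by ring
        have := step_CC hu1 hu2 α β ((s - d * β) / (α - β)) (d - (s - d * β) / (α - β))
          hα0 hβ0 hαβ (by rw [CC_alg1 hαβ]) (by rw [CC_alg2 hαβ key]) h
        rw [hval] at this
        exact this
      · -- characteristic 2, y ≠ 0 : conic plus tangent point
        obtain ⟨a, ha2⟩ := sq_surjective h2 ((t - d') / d)
        have ha0 : a ≠ 0 := by
          intro hc
          rw [hc] at ha2
          have : t - d' = 0 := by
            have := ha2.symm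
            rw [div_eq_iff hd] at this
            simpa using this
          exact hy this
        exact step_CT hu1 hu2 a d (s - d * a) ha0 (by ring)
          (by rw [ha2]; field_simp; rfl) h
    · -- odd characteristic, card ≥ 7 : two conic points via root avoidance
      have h7 := card_ge_seven hF hq h2
      obtain ⟨α, hα0, hαsd, hαys, hquad⟩ :=
        exists_nonroot h7 0 (s / d) ((t - d') / s) (d := d) (e := -(2 * s)) (f := t - d') hd
      have hden : s - d * α ≠ 0 := by
        intro hc
        exact hαsd (by rw [eq_div_iff hd]; linear_combination -hc)
      set β := (t - d' - s * α) / (s - d * α) with hβdef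
      have hβ0 : β ≠ 0 := by
        apply div_ne_zero _ hden
        intro hc
        exact hαys (by rw [eq_div_iff hs]; linear_combination -hc)
      have hαβ : α ≠ β := by
        intro hc
        rw [hβdef, eq_div_iff hden] at hc
        exact hquad (by linear_combination -hc)
      have key : s * (α + β) - d * (α * β) = t - d' := by
        have e : β * (s - d * α) = t - d' - s * α := by
          rw [hβdef]; exact div_mul_cancel₀ _ hden
        linear_combination e
      have hval : (s - d * β) / (α - β) + (d - (s - d * β) / (α - β)) = d := by ring
      have := step_CC hu1 hu2 α β ((s - d * β) / (α - β)) (d - (s - d * β) / (α - β))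
        hα0 hβ0 hαβ (by rw [CC_alg1 hαβ]) (by rw [CC_alg2 hαβ key]) h
      rw [hval] at this
      exact this

/-- Flexibility at a level with `s = 0`, `d' ≠ t`: any nonzero outgoing debt. -/
lemma wrap_F2 (hF : Fintype.card F = q) (hq : q = 4 ∨ 7 ≤ q)
    (hu1 : 1 ≤ u) (hu2 : u ≤ ρ) (hs : v (pos ρ (2 * u)) = 0)
    (hdt : d' ≠ v (pos ρ (2 * u + 1))) (h : Rep v (u + 1) n d') {d : F} (hd : d ≠ 0) :
    Rep v u (n + 2) d := by
  set t := v (pos ρ (2 * u + 1)) with htdef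
  have hy : t - d' ≠ 0 := sub_ne_zero.mpr (Ne.symm hdt)
  set m := (d' - t) / d with hmdef
  have hm : m ≠ 0 := div_ne_zero (by intro hc; exact hy (by linear_combination -hc)) hd
  obtain ⟨α, hα0, hα2⟩ : ∃ α : F, α ≠ 0 ∧ α ^ 2 ≠ m := by
    by_cases h2 : (2 : F) = 0
    · obtain ⟨r, hr⟩ := sq_surjective h2 m
      obtain ⟨α, h1', h2', _⟩ := exists_avoid3 hF hq 0 r r
      refine ⟨α, h1', fun hc => h2' ?_⟩
      have : (α - r) ^ 2 = 0 := by linear_combination hc + hr + (m - α * r) * h2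
      have := pow_eq_zero_iff (n := 2) (by norm_num) |>.mp this
      exact sub_eq_zero.mp this
    · have h7 := card_ge_seven hF hq h2
      obtain ⟨α, h1', _, _, hnr⟩ :=
        exists_nonroot h7 0 0 0 (d := 1) (e := 0) (f := -m) (one_ne_zero)
      exact ⟨α, h1', fun hc => hnr (by linear_combination hc)⟩
  set β := m / α with hβdef
  have hβ0 : β ≠ 0 := div_ne_zero hm hα0
  have hαβ : α ≠ β := by
    intro hc
    rw [hβdef, eq_div_iff hα0] at hc
    exact hα2 (by linear_combination hc)
  have hprod : α * β = m := by
    rw [hβdef]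
    field_simp
  have key : (0 : F) * (α + β) - d * (α * β) = t - d' := by
    rw [hprod, hmdef]
    field_simp
    ring
  have hval : ((0 : F) - d * β) / (α - β) + (d - ((0 : F) - d * β) / (α - β)) = d := by ring
  have := step_CC hu1 hu2 α β (((0 : F) - d * β) / (α - β))
    (d - ((0 : F) - d * β) / (α - β)) hα0 hβ0 hαβ
    (by rw [CC_alg1 hαβ]; exact hs.symm) (by rw [CC_alg2 hαβ key]) h
  rw [hval] at this
  exact this

/-- Flexibility at a level with `s = 0`, `d' = t`: any outgoing debt, three extra points. -/
lemma wrap_F3 (hF : Fintype.card F = q) (hq : q = 4 ∨ 7 ≤ q)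
    (hu1 : 1 ≤ u) (hu2 : u ≤ ρ) (hs : v (pos ρ (2 * u)) = 0)
    (h : Rep v (u + 1) n (v (pos ρ (2 * u + 1)))) (d : F) :
    Rep v u (n + 3) d := by
  by_cases hd : d = 0
  · subst hd
    exact (step_none hu1 hu2 hs h).mono (by omega)
  · obtain ⟨β, hβ0, hβ1, hβm1⟩ := exists_avoid3 hF hq 0 1 (-1)
    have hβsq : β ^ 2 - 1 ≠ 0 := by
      intro hc
      have : (β - 1) * (β + 1) = 0 := by linear_combination hc
      rcases mul_eq_zero.mp this with h' | h'
      · exact hβ1 (by linear_combination h')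
      · exact hβm1 (by linear_combination h')
    set γ₁ := d * β ^ 2 / (β ^ 2 - 1) with hγ₁def
    have hval : γ₁ + (d - γ₁) = d := by ring
    have := step_CCT hu1 hu2 1 β γ₁ (d - γ₁) (-(γ₁ * 1 + (d - γ₁) * β))
      one_ne_zero hβ0 (Ne.symm hβ1)
      (by rw [hs]; ring)
      (by rw [hγ₁def, sub_self]; field_simp; ring) h
    rw [hval] at this
    exact this

end Trans

/-! ### The downward induction -/

section Induction
variable [Fintype F] {q : ℕ}
variable {v : Fin (2 * ρ + 2) → F}

def INVp (v : Fin (2 * ρ + 2) → F) (u H : ℕ) : Prop :=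
  ((∀ d, Rep v u (H + 1) d) ∧ (∃ d, Rep v u H d)) ∨
  (1 ≤ H ∧ (∀ d, Rep v u (H + 2) d) ∧ (∃ d, Rep v u (H - 1) d))

lemma inv_base : INVp v (ρ + 1) 0 :=
  Or.inl ⟨fun d => rep_base v d, ⟨0, rep_base0 v⟩⟩

lemma inv_step (hF : Fintype.card F = q) (hq : q = 4 ∨ 7 ≤ q)
    {u : ℕ} (hu1 : 1 ≤ u) (hu2 : u ≤ ρ) {K : ℕ}
    (h : INVp v (u + 1) K) : INVp v u (K + 1) := by
  have hone : (v (pos ρ (2 * u + 1)) + 1 : F) ≠ v (pos ρ (2 * u + 1)) := by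
    intro hc; exact one_ne_zero (by linear_combination hc)
  rcases h with ⟨hall, d₀, hex⟩ | ⟨hK, hall, d₀, hex⟩
  · by_cases hs : v (pos ρ (2 * u)) = 0
    · by_cases hT : Rep v (u + 1) K (v (pos ρ (2 * u + 1)))
      · refine Or.inr ⟨by omega, ?_, ⟨0, ?_⟩⟩
        · intro d
          by_cases hd : d = 0
          · subst hd
            exact (step_none hu1 hu2 hs (hall _)).mono (by omega)
          · exact (wrap_F2 hF hq hu1 hu2 hs hone (hall (v (pos ρ (2 * u + 1)) + 1)) hd).mono
              (by omega)
        · have := step_none hu1 hu2 hs hT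
          simpa using this
      · have hd₀t : d₀ ≠ v (pos ρ (2 * u + 1)) := fun hc => hT (hc ▸ hex)
        refine Or.inl ⟨?_, ⟨0, step_none hu1 hu2 hs (hall _)⟩⟩
        intro d
        by_cases hd : d = 0
        · subst hd
          exact (step_none hu1 hu2 hs (hall _)).mono (by omega)
        · exact (wrap_F2 hF hq hu1 hu2 hs hd₀t hex hd).mono (by omega)
    · refine Or.inl ⟨fun d => wrap_F1 hF hq hu1 hu2 hs hex d, ?_⟩
      by_cases hd₀t : d₀ = v (pos ρ (2 * u + 1))
      · exact ⟨0, step_T hu1 hu2 (hd₀t ▸ hex)⟩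
      · exact wrap_C hu1 hu2 hs hd₀t hex
  · by_cases hs : v (pos ρ (2 * u)) = 0
    · by_cases hd₀t : d₀ = v (pos ρ (2 * u + 1))
      · refine Or.inl ⟨?_, ⟨0, (step_none hu1 hu2 hs (hd₀t ▸ hex)).mono (by omega)⟩⟩
        intro d
        by_cases hd : d = 0
        · subst hd
          exact (step_none hu1 hu2 hs (hall _)).mono (by omega)
        · exact (wrap_F3 hF hq hu1 hu2 hs (hd₀t ▸ hex) d).mono (by omega)
      · refine Or.inl ⟨?_, ⟨1, (wrap_F2 hF hq hu1 hu2 hs hd₀t hex one_ne_zero).mono (by omega)⟩⟩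
        intro d
        by_cases hd : d = 0
        · subst hd
          exact (step_none hu1 hu2 hs (hall _)).mono (by omega)
        · exact (wrap_F2 hF hq hu1 hu2 hs hd₀t hex hd).mono (by omega)
    · refine Or.inl ⟨fun d => (wrap_F1 hF hq hu1 hu2 hs hex d).mono (by omega), ?_⟩
      by_cases hd₀t : d₀ = v (pos ρ (2 * u + 1))
      · exact ⟨0, (step_T hu1 hu2 (hd₀t ▸ hex)).mono (by omega)⟩
      · obtain ⟨d, hd⟩ := wrap_C hu1 hu2 hs hd₀t hex
        exact ⟨d, hd.mono (by omega)⟩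

lemma inv_chain (hF : Fintype.card F = q) (hq : q = 4 ∨ 7 ≤ q) :
    ∀ k, k ≤ ρ → INVp v (ρ + 1 - k) k := by
  intro k
  induction k with
  | zero =>
    intro _
    simpa using (inv_base (v := v))
  | succ k ih =>
    intro hk
    have h0 := ih (by omega)
    rw [show ρ + 1 - k = (ρ - k) + 1 from by omega] at h0
    have := inv_step hF hq (u := ρ - k) (by omega) (by omega) h0
    rwa [show ρ + 1 - (k + 1) = ρ - k from by omega]

lemma inv_one (hF : Fintype.card F = q) (hq : q = 4 ∨ 7 ≤ q) : INVp v 1 ρ := by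
  have := inv_chain (v := v) hF hq ρ le_rfl
  rwa [show ρ + 1 - ρ = 1 from by omega] at this

end Induction

/-! ### Level-0 assembly -/

lemma ptL_at0 (a : F) : ptL ρ a (pos ρ 0) = 1 := by
  have h := pos_val (ρ := ρ) (j := 0) (by omega)
  rw [ptL_apply, if_pos h]

lemma ptL_at1 (a : F) : ptL ρ a (pos ρ 1) = a := by
  have h := pos_val (ρ := ρ) (j := 1) (by omega)
  rw [ptL_apply, if_neg (by omega), if_pos h]

lemma ptL_high (a : F) : ∀ i : Fin (2 * ρ + 2), 1 < (i : ℕ) → ptL ρ a i = 0 := by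
  intro i hi
  rw [ptL_apply, if_neg (by omega), if_neg (by omega)]

lemma A0_at0 : unitV F (2 * ρ + 2) 0 (pos ρ 0) = 1 := by
  have h := pos_val (ρ := ρ) (j := 0) (by omega)
  rw [unitV_apply, if_pos h]

lemma A0_at1 : unitV F (2 * ρ + 2) 0 (pos ρ 1) = 0 := by
  have h := pos_val (ρ := ρ) (j := 1) (by omega)
  rw [unitV_apply, if_neg (by omega)]

lemma A0_high : ∀ i : Fin (2 * ρ + 2), 1 < (i : ℕ) → unitV F (2 * ρ + 2) 0 i = 0 := by
  intro i hi
  rw [unitV_apply, if_neg (by omega)]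

lemma ptL_ne_ptL {a b : F} (hab : a ≠ b) : ptL ρ a ≠ ptL ρ b := by
  intro h
  have := congrFun h (pos ρ 1)
  rw [ptL_at1, ptL_at1] at this
  exact hab this

lemma comb_mono {S : Set (Fin (2 * ρ + 2) → F)} {k k' : ℕ} {v : Fin (2 * ρ + 2) → F}
    (h : IsCombOfAtMost S k v) (hk : k ≤ k') : IsCombOfAtMost S k' v := by
  obtain ⟨t, c, h1, h2, h3⟩ := h
  exact ⟨t, c, h1, le_trans h2 hk, h3⟩

lemma rep_finish {v : Fin (2 * ρ + 2) → F} {n : ℕ} {d : F} (h : Rep v 1 n d)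
    (p : Finset (Fin (2 * ρ + 2) → F)) (γ : (Fin (2 * ρ + 2) → F) → F)
    (hpS : ↑p ⊆ constructionS F ρ)
    (hlow : ∀ w ∈ p, w (pos ρ 0) ≠ 0)
    (hhigh : ∀ w ∈ p, ∀ i : Fin (2 * ρ + 2), 1 < (i : ℕ) → w i = 0)
    (h0 : ∑ w ∈ p, γ w * w (pos ρ 0) = v (pos ρ 0))
    (h1 : ∑ w ∈ p, γ w * w (pos ρ 1) = v (pos ρ 1) - d) :
    IsCombOfAtMost (constructionS F ρ) (n + p.card) v := by
  classical
  obtain ⟨t, c, htS, htsupp, htcard, htsum⟩ := h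
  have hpos0 : ((pos ρ 0 : Fin (2 * ρ + 2)) : ℕ) = 0 := pos_val (by omega)
  have hdisj : Disjoint p t := by
    rw [Finset.disjoint_left]
    intro w hwp hwt
    exact hlow w hwp (htsupp w hwt (pos ρ 0) (by omega))
  refine ⟨p ∪ t, fun w => if w ∈ p then γ w else c w, ?_, ?_, ?_⟩
  · rw [Finset.coe_union]
    exact Set.union_subset hpS htS
  · calc (p ∪ t).card ≤ p.card + t.card := Finset.card_union_le _ _
      _ ≤ n + p.card := by omega
  · rw [Finset.sum_union hdisj]
    have e1 : ∑ w ∈ p, (if w ∈ p then γ w else c w) • w = ∑ w ∈ p, γ w • w :=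
      Finset.sum_congr rfl (fun w hw => by rw [if_pos hw])
    have e2 : ∑ w ∈ t, (if w ∈ p then γ w else c w) • w = ∑ w ∈ t, c w • w :=
      Finset.sum_congr rfl (fun w hw => by rw [if_neg (Finset.disjoint_right.mp hdisj hw)])
    rw [e1, e2, htsum]
    funext i
    rw [Pi.add_apply]
    have hsum : (∑ w ∈ p, γ w • w) i = ∑ w ∈ p, γ w * w i := by
      rw [Finset.sum_apply]
      exact Finset.sum_congr rfl (fun w _ => by rw [Pi.smul_apply, smul_eq_mul])
    by_cases hA : (i : ℕ) = 0
    · have hip : i = pos ρ 0 := Fin.ext (by rw [hpos0]; exact hA)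
      rw [hsum, hip, h0, tgt_apply, pos_val (by omega), if_pos (by omega)]
      ring
    · by_cases hB : (i : ℕ) = 1
      · have hip : i = pos ρ 1 := Fin.ext (by rw [pos_val (by omega)]; exact hB)
        rw [hsum, hip, h1, tgt_apply, pos_val (by omega), if_neg (by omega), if_pos (by omega)]
        ring
      · have hE : 1 < (i : ℕ) := by omega
        have hz : ∑ w ∈ p, γ w * w i = 0 :=
          Finset.sum_eq_zero (fun w hw => by rw [hhigh w hw i hE, mul_zero])
        rw [hsum, hz, tgt_apply, if_neg (by omega), if_neg (by omega)]
        ring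

/-- Finish with no extra point (`v₀ = 0`, debt matches `v₁`). -/
lemma fin_none {v : Fin (2 * ρ + 2) → F} {n : ℕ} (h0 : v (pos ρ 0) = 0)
    (h : Rep v 1 n (v (pos ρ 1))) : IsCombOfAtMost (constructionS F ρ) n v := by
  classical
  have := rep_finish h ∅ (fun _ => 0) (by simp) (by simp) (by simp)
    (by rw [Finset.sum_empty]; exact h0.symm) (by rw [Finset.sum_empty, sub_self])
  simpa using this

/-- Finish with one point (`v₀ ≠ 0`, arbitrary debt). -/
lemma fin_one {v : Fin (2 * ρ + 2) → F} {n : ℕ} {d : F} (hv0 : v (pos ρ 0) ≠ 0)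
    (h : Rep v 1 n d) : IsCombOfAtMost (constructionS F ρ) (n + 1) v := by
  classical
  by_cases hw : v (pos ρ 1) - d = 0
  · have := rep_finish h {unitV F (2 * ρ + 2) 0} (fun _ => v (pos ρ 0))
      (by intro w hwm
          rw [Finset.coe_singleton, Set.mem_singleton_iff] at hwm
          rw [hwm]; exact mem_A0)
      (by intro w hwm
          rw [Finset.mem_singleton] at hwm
          rw [hwm, A0_at0]; exact one_ne_zero)
      (by intro w hwm
          rw [Finset.mem_singleton] at hwm
          intro i hi; rw [hwm]; exact A0_high i hi)
      (by rw [Finset.sum_singleton, A0_at0, mul_one])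
      (by rw [Finset.sum_singleton, A0_at1, mul_zero]; exact hw.symm)
    simpa using this
  · set a := (v (pos ρ 1) - d) / v (pos ρ 0) with hadef
    have ha : a ≠ 0 := div_ne_zero hw hv0
    have := rep_finish h {ptL ρ a} (fun _ => v (pos ρ 0))
      (by intro w hwm
          rw [Finset.coe_singleton, Set.mem_singleton_iff] at hwm
          rw [hwm]; exact mem_L ha)
      (by intro w hwm
          rw [Finset.mem_singleton] at hwm
          rw [hwm, ptL_at0]; exact one_ne_zero)
      (by intro w hwm
          rw [Finset.mem_singleton] at hwm
          intro i hi; rw [hwm]; exact ptL_high a i hi)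
      (by rw [Finset.sum_singleton, ptL_at0, mul_one])
      (by rw [Finset.sum_singleton, ptL_at1, hadef]; field_simp)
    simpa using this

/-- Finish with two line points (`v₀ = 0`, wrong debt). -/
lemma fin_two [Fintype F] {q : ℕ} (hF : Fintype.card F = q) (hq : q = 4 ∨ 7 ≤ q)
    {v : Fin (2 * ρ + 2) → F} {n : ℕ} {d : F} (hv0 : v (pos ρ 0) = 0)
    (h : Rep v 1 n d) : IsCombOfAtMost (constructionS F ρ) (n + 2) v := by
  classical
  set w := v (pos ρ 1) - d with hwdef
  by_cases hw : w = 0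
  · have hvd : v (pos ρ 1) = d := by
      have := hwdef.symm.trans hw
      linear_combination this
    rw [← hvd] at h
    exact comb_mono (fin_none hv0 h) (by omega)
  · obtain ⟨b, hb0, hb1, _⟩ := exists_avoid3 hF hq 0 1 1
    have h1b : (1 : F) - b ≠ 0 := sub_ne_zero.mpr (Ne.symm hb1)
    have hne : ptL ρ (1 : F) ≠ ptL ρ b := ptL_ne_ptL (Ne.symm hb1)
    have hnm : ptL ρ (1 : F) ∉ ({ptL ρ b} : Finset (Fin (2 * ρ + 2) → F)) := by
      rw [Finset.mem_singleton]; exact hne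
    have hcard : ({ptL ρ (1 : F), ptL ρ b} : Finset (Fin (2 * ρ + 2) → F)).card = 2 := by
      rw [Finset.card_insert_of_notMem hnm, Finset.card_singleton]
    have hmem : ∀ x ∈ ({ptL ρ (1 : F), ptL ρ b} : Finset (Fin (2 * ρ + 2) → F)),
        x = ptL ρ (1 : F) ∨ x = ptL ρ b := by
      intro x hx
      rcases Finset.mem_insert.mp hx with hx | hx
      · exact Or.inl hx
      · exact Or.inr (Finset.mem_singleton.mp hx)
    have := rep_finish h {ptL ρ (1 : F), ptL ρ b}
      (fun x => if x = ptL ρ (1 : F) then w / (1 - b) else -(w / (1 - b)))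
      (by intro x hx
          rw [Finset.coe_insert, Set.mem_insert_iff, Finset.coe_singleton,
            Set.mem_singleton_iff] at hx
          rcases hx with hx | hx
          · rw [hx]; exact mem_L one_ne_zero
          · rw [hx]; exact mem_L hb0)
      (by intro x hx
          rcases hmem x hx with hx | hx <;> (rw [hx, ptL_at0]; exact one_ne_zero))
      (by intro x hx i hi
          rcases hmem x hx with hx | hx <;> (rw [hx]; exact ptL_high _ i hi))
      (by rw [Finset.sum_insert hnm, Finset.sum_singleton]
          beta_reduce
          rw [if_pos rfl, if_neg (Ne.symm hne), ptL_at0, ptL_at0, hv0]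
          ring)
      (by rw [Finset.sum_insert hnm, Finset.sum_singleton]
          beta_reduce
          rw [if_pos rfl, if_neg (Ne.symm hne), ptL_at1, ptL_at1, ← hwdef]
          field_simp
          ring)
    rw [hcard] at this
    exact this

/-- The construction saturates within `ρ + 1`. -/
theorem sat_upper [Fintype F] {q : ℕ} (hF : Fintype.card F = q) (hq : q = 4 ∨ 7 ≤ q) :
    SaturatesWithin (constructionS F ρ) (ρ + 1) := by
  intro v hv
  have hinv := inv_one (v := v) hF hq
  have hex : ∃ m, m ≤ ρ ∧ ∃ d₀, Rep v 1 m d₀ := by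
    rcases hinv with ⟨_, d₀, hx⟩ | ⟨hK, _, d₀, hx⟩
    · exact ⟨ρ, le_rfl, d₀, hx⟩
    · exact ⟨ρ - 1, by omega, d₀, hx⟩
  by_cases h0 : v (pos ρ 0) = 0
  · rcases hinv with ⟨hall, _⟩ | ⟨hK, _, d₀, hx⟩
    · exact fin_none h0 (hall _)
    · exact comb_mono (fin_two hF hq h0 hx) (by omega)
  · obtain ⟨m, hm, d₀, hx⟩ := hex
    exact comb_mono (fin_one h0 hx) (by omega)

/-! ### Lower bound and rigidity -/

lemma coord_sum {v : Fin (2 * ρ + 2) → F} {t : Finset (Fin (2 * ρ + 2) → F)}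
    {c : (Fin (2 * ρ + 2) → F) → F} (hsum : v = ∑ w ∈ t, c w • w) :
    ∀ j : Fin (2 * ρ + 2), v j = ∑ w ∈ t, c w * w j := by
  intro j
  rw [hsum, Finset.sum_apply]
  exact Finset.sum_congr rfl (fun w _ => by rw [Pi.smul_apply, smul_eq_mul])

/-- The all-evens vector. -/
def vStar (F : Type) [Field F] (ρ : ℕ) : Fin (2 * ρ + 2) → F :=
  fun i => if (i : ℕ) % 2 = 0 then 1 else 0

lemma vStar_even {j : ℕ} (hj : j ≤ 2 * ρ + 1) (hje : j % 2 = 0) :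
    vStar F ρ (pos ρ j) = 1 := by
  have h := pos_val (ρ := ρ) (j := j) hj
  simp only [vStar]
  rw [if_pos (by omega)]

lemma vStar_odd {j : ℕ} (hj : j ≤ 2 * ρ + 1) (hje : j % 2 = 1) :
    vStar F ρ (pos ρ j) = 0 := by
  have h := pos_val (ρ := ρ) (j := j) hj
  simp only [vStar]
  rw [if_neg (by omega)]

/-- Any representation of a vector that is nonzero on all the "private" even
coordinates uses at least `ρ + 1` points, one of each level; if there are at most
`ρ + 1` points we can enumerate them by level. -/
lemma rigid {v : Fin (2 * ρ + 2) → F} (hv0 : v (pos ρ 0) ≠ 0)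
    (hev : ∀ u, 1 ≤ u → u ≤ ρ → v (pos ρ (2 * u)) ≠ 0)
    {t : Finset (Fin (2 * ρ + 2) → F)} {c : (Fin (2 * ρ + 2) → F) → F}
    (hS : ↑t ⊆ constructionS F ρ) (hcard : t.card ≤ ρ + 1)
    (hsum : v = ∑ w ∈ t, c w • w) :
    ∃ g : ℕ → (Fin (2 * ρ + 2) → F),
      (∀ u, u ≤ ρ → g u ∈ t) ∧
      (∀ j : Fin (2 * ρ + 2), v j = ∑ u ∈ Finset.range (ρ + 1), c (g u) * (g u) j) ∧
      (g 0 = unitV F (2 * ρ + 2) 0 ∨ ∃ a, a ≠ 0 ∧ g 0 = ptL ρ a) ∧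
      (∀ u, 1 ≤ u → u ≤ ρ →
        (∃ a, a ≠ 0 ∧ g u = ptC ρ u a) ∨ g u = unitV F (2 * ρ + 2) (2 * u)) := by
  classical
  have hcoord := coord_sum hsum
  have hwit : ∀ u : Fin (ρ + 1), ∃ w ∈ t, c w * w (pos ρ (2 * (u : ℕ))) ≠ 0 := by
    intro u
    apply Finset.exists_ne_zero_of_sum_ne_zero
    rw [← hcoord]
    rcases Nat.eq_zero_or_pos (u : ℕ) with h | h
    · rw [h]
      exact hv0
    · exact hev _ h (by have := u.isLt; omega)
  choose f hf1 hf2 using hwit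
  have hnz : ∀ u : Fin (ρ + 1), (f u) (pos ρ (2 * (u : ℕ))) ≠ 0 :=
    fun u hz => hf2 u (by rw [hz, mul_zero])
  have hmemS : ∀ u, f u ∈ constructionS F ρ := fun u => hS (hf1 u)
  have hinj : Function.Injective f := by
    intro u u' h
    have h2 := hnz u'
    rw [← h] at h2
    exact Fin.ext (level_unique (hmemS u) (by have := u.isLt; omega) (by have := u'.isLt; omega)
      (pos_val (by have := u.isLt; omega)) (pos_val (by have := u'.isLt; omega)) (hnz u) h2)
  have himg : Finset.image f Finset.univ = t := by
    apply Finset.eq_of_subset_of_card_le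
    · intro w hw
      obtain ⟨u, _, rfl⟩ := Finset.mem_image.mp hw
      exact hf1 u
    · rw [Finset.card_image_of_injective _ hinj, Finset.card_univ, Fintype.card_fin]
      exact hcard
  refine ⟨fun u => f ⟨min u ρ, by omega⟩, ?_, ?_, ?_, ?_⟩
  · intro u hu
    exact hf1 _
  · intro j
    rw [hcoord j, ← himg, Finset.sum_image (fun a _ b _ h => hinj h),
      ← Fin.sum_univ_eq_sum_range (fun u => c (f ⟨min u ρ, by omega⟩) * (f ⟨min u ρ, by omega⟩) j)
        (ρ + 1)]
    apply Finset.sum_congr rfl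
    intro u _
    have he : (⟨min (u : ℕ) ρ, by omega⟩ : Fin (ρ + 1)) = u :=
      Fin.ext (by simp only []; have := u.isLt; omega)
    rw [he]
  · beta_reduce
    have h0 : (⟨min 0 ρ, by omega⟩ : Fin (ρ + 1)) = ⟨0, by omega⟩ :=
      Fin.ext (by simp only []; omega)
    rw [h0]
    have hz : (f ⟨0, by omega⟩) (pos ρ 0) ≠ 0 := hnz ⟨0, by omega⟩
    rcases mem_elim (hmemS ⟨0, by omega⟩) with hA | ⟨a, ha, hL⟩ | ⟨u', hu1', hu2', a, ha, hC⟩ |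
      ⟨u', hu1', hu2', hT⟩ | hI
    · exact Or.inl hA
    · exact Or.inr ⟨a, ha, hL⟩
    · exfalso
      rw [hC] at hz
      have := supp_C hz
      rw [pos_val (by omega)] at this
      omega
    · exfalso
      rw [hT] at hz
      have := supp_unitV hz
      rw [pos_val (by omega)] at this
      omega
    · exfalso
      rw [hI] at hz
      have := supp_unitV hz
      rw [pos_val (by omega)] at this
      omega
  · intro u hu1 hu2
    beta_reduce
    have hm : (⟨min u ρ, by omega⟩ : Fin (ρ + 1)) = ⟨u, by omega⟩ :=
      Fin.ext (by simp only []; omega)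
    rw [hm]
    have hz : (f ⟨u, by omega⟩) (pos ρ (2 * u)) ≠ 0 := hnz ⟨u, by omega⟩
    rcases mem_elim (hmemS ⟨u, by omega⟩) with hA | ⟨a, ha, hL⟩ | ⟨u', hu1', hu2', a, ha, hC⟩ |
      ⟨u', hu1', hu2', hT⟩ | hI
    · exfalso
      rw [hA] at hz
      have := supp_unitV hz
      rw [pos_val (by omega)] at this
      omega
    · exfalso
      rw [hL] at hz
      have := supp_L hz
      rw [pos_val (by omega)] at this
      omega
    · rw [hC] at hz ⊢
      have := supp_C hz
      rw [pos_val (by omega)] at this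
      have huu : u' = u := by omega
      exact Or.inl ⟨a, ha, by rw [huu]⟩
    · rw [hT] at hz ⊢
      have := supp_unitV hz
      rw [pos_val (by omega)] at this
      have huu : u' = u := by omega
      exact Or.inr (by rw [huu])
    · exfalso
      rw [hI] at hz
      have := supp_unitV hz
      rw [pos_val (by omega)] at this
      omega

/-- Vanishing of the level-`w` point at coordinates outside its window. -/
lemma g_off {g : ℕ → (Fin (2 * ρ + 2) → F)}
    (hcls0 : g 0 = unitV F (2 * ρ + 2) 0 ∨ ∃ a, a ≠ 0 ∧ g 0 = ptL ρ a)
    (hcls : ∀ u, 1 ≤ u → u ≤ ρ →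
      (∃ a, a ≠ 0 ∧ g u = ptC ρ u a) ∨ g u = unitV F (2 * ρ + 2) (2 * u))
    {w j : ℕ} (hw : w ≤ ρ) (hj : j ≤ 2 * ρ + 1)
    (h0 : w = 0 → 2 ≤ j) (h1 : 1 ≤ w → j < 2 * w - 1 ∨ 2 * w + 1 < j) :
    (g w) (pos ρ j) = 0 := by
  have hpv : ((pos ρ j : Fin (2 * ρ + 2)) : ℕ) = j := pos_val hj
  rcases Nat.eq_zero_or_pos w with rfl | hw1
  · have hj2 := h0 rfl
    rcases hcls0 with hg | ⟨a, ha, hg⟩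
    · rw [hg, unitV_apply, if_neg (by omega)]
    · rw [hg, ptL_apply, if_neg (by omega), if_neg (by omega)]
  · have hwin := h1 hw1
    rcases hcls w hw1 hw with ⟨a, ha, hg⟩ | hg
    · rw [hg, ptC_apply, if_neg (by omega), if_neg (by omega), if_neg (by omega)]
    · rw [hg, unitV_apply, if_neg (by omega)]

/-- The cascade: a nonzero contribution needed at coordinate `2u-1`, with all the
odd target coordinates above vanishing, is impossible. -/
lemma cascade {v : Fin (2 * ρ + 2) → F} {c : (Fin (2 * ρ + 2) → F) → F}
    {g : ℕ → (Fin (2 * ρ + 2) → F)}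
    (hveq : ∀ j : Fin (2 * ρ + 2), v j = ∑ u ∈ Finset.range (ρ + 1), c (g u) * (g u) j)
    (hcls0 : g 0 = unitV F (2 * ρ + 2) 0 ∨ ∃ a, a ≠ 0 ∧ g 0 = ptL ρ a)
    (hcls : ∀ u, 1 ≤ u → u ≤ ρ →
      (∃ a, a ≠ 0 ∧ g u = ptC ρ u a) ∨ g u = unitV F (2 * ρ + 2) (2 * u)) :
    ∀ k u, u = ρ - k → 1 ≤ u → u ≤ ρ →
      (∀ w, u ≤ w → w ≤ ρ → v (pos ρ (2 * w + 1)) = 0) →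
      c (g u) * (g u) (pos ρ (2 * u - 1)) ≠ 0 → False := by
  intro k
  induction k with
  | zero =>
    intro u hu hu1 hu2 hodd hδ
    have huρ : u = ρ := by omega
    obtain ⟨a, ha, hg⟩ : ∃ a, a ≠ 0 ∧ g u = ptC ρ u a := by
      rcases hcls u hu1 hu2 with h | h
      · exact h
      · exfalso
        rw [h, ptT_at1 hu1 hu2, mul_zero] at hδ
        exact hδ rfl
    rw [hg, ptC_at1 hu1 hu2, mul_one] at hδ
    have heq := hveq (pos ρ (2 * u + 1))
    rw [hodd u le_rfl hu2] at heq
    rw [Finset.sum_eq_single_of_mem u (Finset.mem_range.mpr (by omega)) ?side] at heq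
    · rw [hg, ptC_at3 hu1 hu2] at heq
      exact mul_ne_zero hδ (pow_ne_zero 2 ha) heq.symm
    case side =>
      intro w hwr hwu
      rw [Finset.mem_range] at hwr
      rw [g_off hcls0 hcls (by omega : w ≤ ρ) (by omega)
        (fun _ => by omega) (fun hw1 => by omega), mul_zero]
  | succ k ih =>
    intro u hu hu1 hu2 hodd hδ
    by_cases huρ : u = ρ
    · -- same as base case
      obtain ⟨a, ha, hg⟩ : ∃ a, a ≠ 0 ∧ g u = ptC ρ u a := by
        rcases hcls u hu1 hu2 with h | h
        · exact h
        · exfalso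
          rw [h, ptT_at1 hu1 hu2, mul_zero] at hδ
          exact hδ rfl
      rw [hg, ptC_at1 hu1 hu2, mul_one] at hδ
      have heq := hveq (pos ρ (2 * u + 1))
      rw [hodd u le_rfl hu2] at heq
      rw [Finset.sum_eq_single_of_mem u (Finset.mem_range.mpr (by omega)) ?side2] at heq
      · rw [hg, ptC_at3 hu1 hu2] at heq
        exact mul_ne_zero hδ (pow_ne_zero 2 ha) heq.symm
      case side2 =>
        intro w hwr hwu
        rw [Finset.mem_range] at hwr
        rw [g_off hcls0 hcls (by omega : w ≤ ρ) (by omega)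
          (fun _ => by omega) (fun hw1 => by omega), mul_zero]
    · -- u < ρ
      have huρ' : u < ρ := by omega
      obtain ⟨a, ha, hg⟩ : ∃ a, a ≠ 0 ∧ g u = ptC ρ u a := by
        rcases hcls u hu1 hu2 with h | h
        · exact h
        · exfalso
          rw [h, ptT_at1 hu1 hu2, mul_zero] at hδ
          exact hδ rfl
      rw [hg, ptC_at1 hu1 hu2, mul_one] at hδ
      have heq := hveq (pos ρ (2 * u + 1))
      rw [hodd u le_rfl hu2] at heq
      have hpair : ({u, u + 1} : Finset ℕ) ⊆ Finset.range (ρ + 1) := by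
        intro x hx
        rw [Finset.mem_insert, Finset.mem_singleton] at hx
        rw [Finset.mem_range]
        omega
      rw [← Finset.sum_subset hpair ?vanish] at heq
      · rw [Finset.sum_pair (by omega : u ≠ u + 1)] at heq
        rw [hg, ptC_at3 hu1 hu2] at heq
        have hδ' : c (g (u + 1)) * (g (u + 1)) (pos ρ (2 * (u + 1) - 1)) ≠ 0 := by
          rw [congrArg (pos ρ) (by omega : 2 * (u + 1) - 1 = 2 * u + 1)]
          intro hz
          rw [hz, add_zero] at heq
          exact mul_ne_zero hδ (pow_ne_zero 2 ha) heq.symm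
        exact ih (u + 1) (by omega) (by omega) (by omega)
          (fun w hw1 hw2 => hodd w (by omega) hw2) hδ'
      case vanish =>
        intro w hwr hwm
        rw [Finset.mem_insert, Finset.mem_singleton] at hwm
        push_neg at hwm
        rw [Finset.mem_range] at hwr
        rw [g_off hcls0 hcls (by omega : w ≤ ρ) (by omega)
          (fun _ => by omega) (fun hw1 => by omega), mul_zero]

/-- No `k ≤ ρ` suffices. -/
lemma sat_lower (k : ℕ) (hk : k ≤ ρ) : ¬ SaturatesWithin (constructionS F ρ) k := by
  classical
  intro hsat
  have hv : vStar F ρ ≠ 0 := by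
    intro hc
    have := congrFun hc (pos ρ 0)
    rw [vStar_even (by omega) (by omega)] at this
    exact one_ne_zero this
  obtain ⟨t, c, hS, hcard, hsum⟩ := hsat _ hv
  have hcoord := coord_sum hsum
  have hwit : ∀ u : Fin (ρ + 1), ∃ w ∈ t, c w * w (pos ρ (2 * (u : ℕ))) ≠ 0 := by
    intro u
    apply Finset.exists_ne_zero_of_sum_ne_zero
    rw [← hcoord, vStar_even (by have := u.isLt; omega) (by omega)]
    exact one_ne_zero
  choose f hf1 hf2 using hwit
  have hnz : ∀ u : Fin (ρ + 1), (f u) (pos ρ (2 * (u : ℕ))) ≠ 0 :=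
    fun u hz => hf2 u (by rw [hz, mul_zero])
  have hinj : Function.Injective f := by
    intro u u' h
    have h2 := hnz u'
    rw [← h] at h2
    exact Fin.ext (level_unique (hS (hf1 u)) (by have := u.isLt; omega)
      (by have := u'.isLt; omega)
      (pos_val (by have := u.isLt; omega)) (pos_val (by have := u'.isLt; omega)) (hnz u) h2)
  have hle : ρ + 1 ≤ t.card := by
    have := Finset.card_le_card_of_injOn (s := (Finset.univ : Finset (Fin (ρ + 1)))) (t := t)
      f (fun u _ => hf1 u) hinj.injOn
    rw [Finset.card_univ, Fintype.card_fin] at this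
    exact this
  omega

/-! ### Single / pair coordinate equations -/

lemma veq_single {v : Fin (2 * ρ + 2) → F} {c : (Fin (2 * ρ + 2) → F) → F}
    {g : ℕ → (Fin (2 * ρ + 2) → F)}
    (hveq : ∀ j : Fin (2 * ρ + 2), v j = ∑ u ∈ Finset.range (ρ + 1), c (g u) * (g u) j)
    (hcls0 : g 0 = unitV F (2 * ρ + 2) 0 ∨ ∃ a, a ≠ 0 ∧ g 0 = ptL ρ a)
    (hcls : ∀ u, 1 ≤ u → u ≤ ρ →
      (∃ a, a ≠ 0 ∧ g u = ptC ρ u a) ∨ g u = unitV F (2 * ρ + 2) (2 * u))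
    {u0 j : ℕ} (hu0 : u0 ≤ ρ) (hj : j ≤ 2 * ρ + 1)
    (hoff : ∀ w, w ≤ ρ → w ≠ u0 → (w = 0 → 2 ≤ j) ∧ (1 ≤ w → j < 2 * w - 1 ∨ 2 * w + 1 < j)) :
    v (pos ρ j) = c (g u0) * (g u0) (pos ρ j) := by
  rw [hveq]
  apply Finset.sum_eq_single_of_mem u0 (Finset.mem_range.mpr (by omega))
  intro w hwr hwu
  rw [Finset.mem_range] at hwr
  obtain ⟨o1, o2⟩ := hoff w (by omega) hwu
  rw [g_off hcls0 hcls (by omega) hj o1 o2, mul_zero]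

lemma veq_pair {v : Fin (2 * ρ + 2) → F} {c : (Fin (2 * ρ + 2) → F) → F}
    {g : ℕ → (Fin (2 * ρ + 2) → F)}
    (hveq : ∀ j : Fin (2 * ρ + 2), v j = ∑ u ∈ Finset.range (ρ + 1), c (g u) * (g u) j)
    (hcls0 : g 0 = unitV F (2 * ρ + 2) 0 ∨ ∃ a, a ≠ 0 ∧ g 0 = ptL ρ a)
    (hcls : ∀ u, 1 ≤ u → u ≤ ρ →
      (∃ a, a ≠ 0 ∧ g u = ptC ρ u a) ∨ g u = unitV F (2 * ρ + 2) (2 * u))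
    {u0 u1 j : ℕ} (h01 : u0 < u1) (hu1 : u1 ≤ ρ) (hj : j ≤ 2 * ρ + 1)
    (hoff : ∀ w, w ≤ ρ → w ≠ u0 → w ≠ u1 →
      (w = 0 → 2 ≤ j) ∧ (1 ≤ w → j < 2 * w - 1 ∨ 2 * w + 1 < j)) :
    v (pos ρ j) = c (g u0) * (g u0) (pos ρ j) + c (g u1) * (g u1) (pos ρ j) := by
  rw [hveq]
  have hpair : ({u0, u1} : Finset ℕ) ⊆ Finset.range (ρ + 1) := by
    intro x hx
    rw [Finset.mem_insert, Finset.mem_singleton] at hx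
    rw [Finset.mem_range]
    omega
  rw [← Finset.sum_subset hpair ?van, Finset.sum_pair (by omega : u0 ≠ u1)]
  case van =>
    intro w hwr hwm
    rw [Finset.mem_insert, Finset.mem_singleton] at hwm
    push_neg at hwm
    rw [Finset.mem_range] at hwr
    obtain ⟨o1, o2⟩ := hoff w (by omega) hwm.1 hwm.2
    rw [g_off hcls0 hcls (by omega) hj o1 o2, mul_zero]

/-! ### Witness vectors for minimality -/

def vLine (F : Type) [Field F] (ρ : ℕ) (b : F) : Fin (2 * ρ + 2) → F :=
  fun i => if (i : ℕ) = 1 then b else if (i : ℕ) % 2 = 0 then 1 else 0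

def vConic (F : Type) [Field F] (ρ u : ℕ) (b : F) : Fin (2 * ρ + 2) → F :=
  fun i => if (i : ℕ) = 2 * u - 1 then 1 else if (i : ℕ) = 2 * u then b
    else if (i : ℕ) = 2 * u + 1 then b ^ 2 else if (i : ℕ) % 2 = 0 then 1 else 0

def vInf (F : Type) [Field F] (ρ : ℕ) : Fin (2 * ρ + 2) → F :=
  fun i => if (i : ℕ) = 2 * ρ + 1 then 1 else if (i : ℕ) = 2 * ρ then 0
    else if (i : ℕ) % 2 = 0 then 1 else 0

lemma vLine_eval (b : F) {j : ℕ} (hj : j ≤ 2 * ρ + 1) :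
    vLine F ρ b (pos ρ j) = if j = 1 then b else if j % 2 = 0 then 1 else 0 := by
  have h := pos_val (ρ := ρ) hj
  simp only [vLine]
  rw [h]

lemma vConic_eval (u : ℕ) (b : F) {j : ℕ} (hj : j ≤ 2 * ρ + 1) :
    vConic F ρ u b (pos ρ j) = if j = 2 * u - 1 then 1 else if j = 2 * u then b
      else if j = 2 * u + 1 then b ^ 2 else if j % 2 = 0 then 1 else 0 := by
  have h := pos_val (ρ := ρ) hj
  simp only [vConic]
  rw [h]

lemma vInf_eval {j : ℕ} (hj : j ≤ 2 * ρ + 1) :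
    vInf F ρ (pos ρ j) = if j = 2 * ρ + 1 then 1 else if j = 2 * ρ then 0
      else if j % 2 = 0 then 1 else 0 := by
  have h := pos_val (ρ := ρ) hj
  simp only [vInf]
  rw [h]

/-! ### Essentiality lemmas -/

/-- `A₀` and all the `T_u` are essential (witness `vStar`). -/
lemma ess_AT {t : Finset (Fin (2 * ρ + 2) → F)} {c : (Fin (2 * ρ + 2) → F) → F}
    (hS : ↑t ⊆ constructionS F ρ) (hcard : t.card ≤ ρ + 1)
    (hsum : vStar F ρ = ∑ w ∈ t, c w • w) :
    unitV F (2 * ρ + 2) 0 ∈ t ∧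
      ∀ u0, 1 ≤ u0 → u0 ≤ ρ → unitV F (2 * ρ + 2) (2 * u0) ∈ t := by
  obtain ⟨g, hmem, hveq, hcls0, hcls⟩ := rigid
    (by rw [vStar_even (by omega) (by omega)]; exact one_ne_zero)
    (fun u h1 h2 => by rw [vStar_even (by omega) (by omega)]; exact one_ne_zero)
    hS hcard hsum
  have hodd0 : ∀ w, w ≤ ρ → vStar F ρ (pos ρ (2 * w + 1)) = 0 :=
    fun w hw => vStar_odd (by omega) (by omega)
  constructor
  · rcases id hcls0 with hg | ⟨a, ha, hg⟩
    · exact hg ▸ hmem 0 (by omega)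
    · exfalso
      have hval0 : (g 0) (pos ρ 0) = 1 := by rw [hg]; exact ptL_at0 a
      have hval1 : (g 0) (pos ρ 1) = a := by rw [hg]; exact ptL_at1 a
      have h0eq := veq_single hveq hcls0 hcls (u0 := 0) (j := 0) (by omega) (by omega)
        (fun w hw hwne => ⟨fun h => absurd h hwne, fun h1 => by omega⟩)
      rw [vStar_even (by omega) (by omega), hval0, mul_one] at h0eq
      rcases Nat.eq_zero_or_pos ρ with hρ | hρ
      · have h1eq := veq_single hveq hcls0 hcls (u0 := 0) (j := 1) (by omega) (by omega)
          (fun w hw hwne => ⟨fun h => absurd h hwne, fun h1 => by omega⟩)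
        rw [vStar_odd (by omega) (by omega), hval1, ← h0eq, one_mul] at h1eq
        exact ha h1eq.symm
      · have h1eq := veq_pair hveq hcls0 hcls (u0 := 0) (u1 := 1) (j := 1) (by omega)
          (by omega) (by omega)
          (fun w hw hw0 hw1 => ⟨fun h => absurd h hw0, fun h1 => by omega⟩)
        rw [vStar_odd (by omega) (by omega), hval1, ← h0eq, one_mul] at h1eq
        have hδ : c (g 1) * (g 1) (pos ρ (2 * 1 - 1)) ≠ 0 := by
          show c (g 1) * (g 1) (pos ρ 1) ≠ 0
          intro hz
          rw [hz, add_zero] at h1eq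
          exact ha h1eq.symm
        exact cascade hveq hcls0 hcls (ρ - 1) 1 (by omega) (by omega) (by omega)
          (fun w hw1 hw2 => hodd0 w hw2) hδ
  · intro u0 h1 h2
    rcases hcls u0 h1 h2 with ⟨a, ha, hg⟩ | hg
    · exfalso
      have hval2 : (g u0) (pos ρ (2 * u0)) = a := by rw [hg]; exact ptC_at2 h1 h2 a
      have hval1 : (g u0) (pos ρ (2 * u0 - 1)) = 1 := by rw [hg]; exact ptC_at1 h1 h2 a
      have hueq := veq_single hveq hcls0 hcls (u0 := u0) (j := 2 * u0) (by omega) (by omega)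
        (fun w hw hwne => ⟨fun h => by omega, fun hw1 => by omega⟩)
      rw [vStar_even (by omega) (by omega), hval2] at hueq
      have hγ : c (g u0) ≠ 0 :=
        left_ne_zero_of_mul (fun hz => one_ne_zero (hueq.trans hz))
      have hδ : c (g u0) * (g u0) (pos ρ (2 * u0 - 1)) ≠ 0 := by
        rw [hval1, mul_one]
        exact hγ
      exact cascade hveq hcls0 hcls (ρ - u0) u0 (by omega) h1 h2
        (fun w hw1 hw2 => hodd0 w hw2) hδ
    · exact hg ▸ hmem u0 h2

/-- Each line point is essential (witness `vLine b`). -/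
lemma ess_L {b : F} (hb : b ≠ 0) {t : Finset (Fin (2 * ρ + 2) → F)}
    {c : (Fin (2 * ρ + 2) → F) → F}
    (hS : ↑t ⊆ constructionS F ρ) (hcard : t.card ≤ ρ + 1)
    (hsum : vLine F ρ b = ∑ w ∈ t, c w • w) :
    ptL ρ b ∈ t := by
  obtain ⟨g, hmem, hveq, hcls0, hcls⟩ := rigid
    (by rw [vLine_eval b (by omega), if_neg (by omega), if_pos (by omega)]; exact one_ne_zero)
    (fun u h1 h2 => by
      rw [vLine_eval b (by omega), if_neg (by omega), if_pos (by omega)]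
      exact one_ne_zero)
    hS hcard hsum
  have hodd0 : ∀ w, 1 ≤ w → w ≤ ρ → vLine F ρ b (pos ρ (2 * w + 1)) = 0 := by
    intro w h1 h2
    rw [vLine_eval b (by omega), if_neg (by omega), if_neg (by omega)]
  have h0eq := veq_single hveq hcls0 hcls (u0 := 0) (j := 0) (by omega) (by omega)
    (fun w hw hwne => ⟨fun h => absurd h hwne, fun h1 => by omega⟩)
  rw [vLine_eval b (by omega), if_neg (by omega), if_pos (by omega)] at h0eq
  rcases Nat.eq_zero_or_pos ρ with hρ | hρ
  · have h1eq := veq_single hveq hcls0 hcls (u0 := 0) (j := 1) (by omega) (by omega)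
      (fun w hw hwne => ⟨fun h => absurd h hwne, fun h1 => by omega⟩)
    rw [vLine_eval b (by omega), if_pos (show (1 : ℕ) = 1 from rfl)] at h1eq
    rcases id hcls0 with hg | ⟨a, ha, hg⟩
    · exfalso
      have hval1 : (g 0) (pos ρ 1) = 0 := by rw [hg]; exact A0_at1
      rw [hval1, mul_zero] at h1eq
      exact hb h1eq
    · have hval0 : (g 0) (pos ρ 0) = 1 := by rw [hg]; exact ptL_at0 a
      have hval1 : (g 0) (pos ρ 1) = a := by rw [hg]; exact ptL_at1 a
      rw [hval0, mul_one] at h0eq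
      rw [hval1, ← h0eq, one_mul] at h1eq
      have : ptL ρ b = g 0 := by rw [hg, h1eq]
      rw [this]
      exact hmem 0 (by omega)
  · have h1eq := veq_pair hveq hcls0 hcls (u0 := 0) (u1 := 1) (j := 1) (by omega)
      (by omega) (by omega)
      (fun w hw hw0 hw1 => ⟨fun h => absurd h hw0, fun h1 => by omega⟩)
    rw [vLine_eval b (by omega), if_pos (show (1 : ℕ) = 1 from rfl)] at h1eq
    have hcasc : c (g 1) * (g 1) (pos ρ 1) ≠ 0 → False := by
      intro hδ
      refine cascade hveq hcls0 hcls (ρ - 1) 1 (by omega) (by omega) (by omega)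
        (fun w hw1 hw2 => hodd0 w hw1 hw2) ?_
      show c (g 1) * (g 1) (pos ρ 1) ≠ 0
      exact hδ
    rcases id hcls0 with hg | ⟨a, ha, hg⟩
    · exfalso
      have hval1 : (g 0) (pos ρ 1) = 0 := by rw [hg]; exact A0_at1
      rw [hval1, mul_zero, zero_add] at h1eq
      exact hcasc (fun hz => hb (h1eq.trans hz))
    · have hval0 : (g 0) (pos ρ 0) = 1 := by rw [hg]; exact ptL_at0 a
      have hval1 : (g 0) (pos ρ 1) = a := by rw [hg]; exact ptL_at1 a
      rw [hval0, mul_one] at h0eq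
      rw [hval1, ← h0eq, one_mul] at h1eq
      by_cases hab : a = b
      · have : ptL ρ b = g 0 := by rw [hg, hab]
        rw [this]
        exact hmem 0 (by omega)
      · exfalso
        apply hcasc
        intro hz
        rw [hz, add_zero] at h1eq
        exact hab h1eq.symm

/-- Each conic point is essential (witness `vConic u b`). -/
lemma ess_C {u0 : ℕ} (h1 : 1 ≤ u0) (h2 : u0 ≤ ρ) {b : F} (hb : b ≠ 0)
    {t : Finset (Fin (2 * ρ + 2) → F)} {c : (Fin (2 * ρ + 2) → F) → F}
    (hS : ↑t ⊆ constructionS F ρ) (hcard : t.card ≤ ρ + 1)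
    (hsum : vConic F ρ u0 b = ∑ w ∈ t, c w • w) :
    ptC ρ u0 b ∈ t := by
  obtain ⟨g, hmem, hveq, hcls0, hcls⟩ := rigid
    (by rw [vConic_eval u0 b (by omega), if_neg (by omega), if_neg (by omega),
        if_neg (by omega), if_pos (by omega)]
        exact one_ne_zero)
    (fun u hu1 hu2 => by
      by_cases huu : u = u0
      · rw [vConic_eval u0 b (by omega), if_neg (by omega), if_pos (by omega)]
        exact hb
      · rw [vConic_eval u0 b (by omega), if_neg (by omega), if_neg (by omega),
          if_neg (by omega), if_pos (by omega)]
        exact one_ne_zero)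
    hS hcard hsum
  have hodd0 : ∀ w, u0 + 1 ≤ w → w ≤ ρ → vConic F ρ u0 b (pos ρ (2 * w + 1)) = 0 := by
    intro w hw1 hw2
    rw [vConic_eval u0 b (by omega), if_neg (by omega), if_neg (by omega),
      if_neg (by omega), if_neg (by omega)]
  have hueq := veq_single hveq hcls0 hcls (u0 := u0) (j := 2 * u0) (by omega) (by omega)
    (fun w hw hwne => ⟨fun h => by omega, fun hw1 => by omega⟩)
  rw [vConic_eval u0 b (by omega), if_neg (by omega), if_pos (by omega)] at hueq
  have hoff31 : ∀ w, w ≤ ρ → w ≠ u0 → w ≠ u0 + 1 →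
      (w = 0 → 2 ≤ 2 * u0 + 1) ∧ (1 ≤ w → 2 * u0 + 1 < 2 * w - 1 ∨ 2 * w + 1 < 2 * u0 + 1) :=
    fun w hw hne hne' => ⟨fun _ => by omega, fun hw1 => by omega⟩
  rcases hcls u0 h1 h2 with ⟨a, ha, hg⟩ | hg
  · have hval2 : (g u0) (pos ρ (2 * u0)) = a := by rw [hg]; exact ptC_at2 h1 h2 a
    have hval3 : (g u0) (pos ρ (2 * u0 + 1)) = a ^ 2 := by rw [hg]; exact ptC_at3 h1 h2 a
    rw [hval2] at hueq
    by_cases hab : a = b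
    · have : ptC ρ u0 b = g u0 := by rw [hg, hab]
      rw [this]
      exact hmem u0 h2
    · exfalso
      by_cases huρ : u0 = ρ
      · have h3eq := veq_single hveq hcls0 hcls (u0 := u0) (j := 2 * u0 + 1) (by omega)
          (by omega) (fun w hw hwne => ⟨fun _ => by omega, fun hw1 => by omega⟩)
        rw [vConic_eval u0 b (by omega), if_neg (by omega), if_neg (by omega),
          if_pos (show 2 * u0 + 1 = 2 * u0 + 1 from rfl), hval3] at h3eq
        have hz : b * (b - a) = 0 := by linear_combination h3eq - a * hueq
        rcases mul_eq_zero.mp hz with h' | h'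
        · exact hb h'
        · exact hab (sub_eq_zero.mp h').symm
      · have h3eq := veq_pair hveq hcls0 hcls (u0 := u0) (u1 := u0 + 1) (j := 2 * u0 + 1)
          (by omega) (by omega) (by omega) hoff31
        rw [vConic_eval u0 b (by omega), if_neg (by omega), if_neg (by omega),
          if_pos (show 2 * u0 + 1 = 2 * u0 + 1 from rfl), hval3] at h3eq
        have hδ : c (g (u0 + 1)) * (g (u0 + 1)) (pos ρ (2 * (u0 + 1) - 1)) ≠ 0 := by
          rw [congrArg (pos ρ) (by omega : 2 * (u0 + 1) - 1 = 2 * u0 + 1)]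
          intro hz
          rw [hz, add_zero] at h3eq
          have hz2 : b * (b - a) = 0 := by linear_combination h3eq - a * hueq
          rcases mul_eq_zero.mp hz2 with h' | h'
          · exact hb h'
          · exact hab (sub_eq_zero.mp h').symm
        exact cascade hveq hcls0 hcls (ρ - (u0 + 1)) (u0 + 1) (by omega) (by omega) (by omega)
          (fun w hw1 hw2 => hodd0 w hw1 hw2) hδ
  · exfalso
    have hvalT2 : (g u0) (pos ρ (2 * u0)) = 1 := by rw [hg]; exact ptT_at2 h1 h2
    have hvalT3 : (g u0) (pos ρ (2 * u0 + 1)) = 0 := by rw [hg]; exact ptT_at3 h1 h2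
    rw [hvalT2, mul_one] at hueq
    by_cases huρ : u0 = ρ
    · have h3eq := veq_single hveq hcls0 hcls (u0 := u0) (j := 2 * u0 + 1) (by omega)
        (by omega) (fun w hw hwne => ⟨fun _ => by omega, fun hw1 => by omega⟩)
      rw [vConic_eval u0 b (by omega), if_neg (by omega), if_neg (by omega),
        if_pos (show 2 * u0 + 1 = 2 * u0 + 1 from rfl), hvalT3, mul_zero] at h3eq
      exact pow_ne_zero 2 hb h3eq
    · have h3eq := veq_pair hveq hcls0 hcls (u0 := u0) (u1 := u0 + 1) (j := 2 * u0 + 1)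
        (by omega) (by omega) (by omega) hoff31
      rw [vConic_eval u0 b (by omega), if_neg (by omega), if_neg (by omega),
        if_pos (show 2 * u0 + 1 = 2 * u0 + 1 from rfl), hvalT3, mul_zero, zero_add] at h3eq
      have hδ : c (g (u0 + 1)) * (g (u0 + 1)) (pos ρ (2 * (u0 + 1) - 1)) ≠ 0 := by
        rw [congrArg (pos ρ) (by omega : 2 * (u0 + 1) - 1 = 2 * u0 + 1)]
        intro hz
        rw [← h3eq] at hz
        exact pow_ne_zero 2 hb hz
      exact cascade hveq hcls0 hcls (ρ - (u0 + 1)) (u0 + 1) (by omega) (by omega) (by omega)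
        (fun w hw1 hw2 => hodd0 w hw1 hw2) hδ

/-- The point at infinity is essential (witness `vInf`). -/
lemma ess_I {t : Finset (Fin (2 * ρ + 2) → F)} {c : (Fin (2 * ρ + 2) → F) → F}
    (hS : ↑t ⊆ constructionS F ρ) (hcard : t.card ≤ ρ + 1)
    (hsum : vInf F ρ = ∑ w ∈ t, c w • w) :
    unitV F (2 * ρ + 2) (2 * ρ + 1) ∈ t := by
  classical
  have hcoord := coord_sum hsum
  rcases Nat.eq_zero_or_pos ρ with hρ | hρ
  · -- ρ = 0 : direct argument
    obtain ⟨w, hwt, hwne⟩ := Finset.exists_ne_zero_of_sum_ne_zero (s := t)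
      (f := fun w => c w * w (pos ρ (2 * ρ + 1)))
      (by rw [← hcoord, vInf_eval (by omega), if_pos rfl]; exact one_ne_zero)
    have huni : ∀ x ∈ t, x = w := fun x hx =>
      Finset.card_le_one.mp (by omega) x hx w hwt
    have h0eq : vInf F ρ (pos ρ 0) = c w * w (pos ρ 0) := by
      rw [hcoord]
      apply Finset.sum_eq_single_of_mem w hwt
      intro x hx hxw
      exact absurd (huni x hx) hxw
    have h1eq : vInf F ρ (pos ρ (2 * ρ + 1)) = c w * w (pos ρ (2 * ρ + 1)) := by
      rw [hcoord]
      apply Finset.sum_eq_single_of_mem w hwt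
      intro x hx hxw
      exact absurd (huni x hx) hxw
    rw [vInf_eval (by omega), if_pos rfl] at h1eq
    rw [vInf_eval (by omega), if_neg (by omega), if_pos (by omega)] at h0eq
    rcases mem_elim (hS hwt) with hA | ⟨a, ha, hL⟩ | ⟨u', hu1', hu2', a, ha, hC⟩ |
      ⟨u', hu1', hu2', hT⟩ | hI
    · exfalso
      have : w (pos ρ (2 * ρ + 1)) = 0 := by
        rw [hA, unitV_apply, if_neg (by rw [pos_val (by omega)]; omega)]
      rw [this, mul_zero] at h1eq
      exact one_ne_zero h1eq
    · exfalso
      rw [hL, ptL_at0, mul_one] at h0eq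
      rw [hL] at h1eq
      rw [← h0eq, zero_mul] at h1eq
      exact one_ne_zero h1eq
    · omega
    · omega
    · exact hI ▸ hwt
  · -- ρ ≥ 1
    have hval : ∀ u : ℕ, u ≤ ρ →
        vInf F ρ (pos ρ (if u = ρ then 2 * ρ + 1 else 2 * u)) = 1 := by
      intro u hu
      by_cases hc : u = ρ
      · rw [if_pos hc, vInf_eval (by omega), if_pos rfl]
      · rw [if_neg hc, vInf_eval (by omega), if_neg (by omega), if_neg (by omega),
          if_pos (by omega)]
    have hwit : ∀ u : Fin (ρ + 1), ∃ w ∈ t,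
        c w * w (pos ρ (if (u : ℕ) = ρ then 2 * ρ + 1 else 2 * (u : ℕ))) ≠ 0 := by
      intro u
      apply Finset.exists_ne_zero_of_sum_ne_zero
      rw [← hcoord, hval _ (by have := u.isLt; omega)]
      exact one_ne_zero
    choose f hf1 hf2 using hwit
    have hnz : ∀ u : Fin (ρ + 1),
        (f u) (pos ρ (if (u : ℕ) = ρ then 2 * ρ + 1 else 2 * (u : ℕ))) ≠ 0 :=
      fun u hz => hf2 u (by rw [hz, mul_zero])
    have hJfact : ∀ u : Fin (ρ + 1),
        ((u : ℕ) = ρ ∧ (if (u : ℕ) = ρ then 2 * ρ + 1 else 2 * (u : ℕ)) = 2 * ρ + 1) ∨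
        ((u : ℕ) < ρ ∧ (if (u : ℕ) = ρ then 2 * ρ + 1 else 2 * (u : ℕ)) = 2 * (u : ℕ)) := by
      intro u
      by_cases hc : (u : ℕ) = ρ
      · exact Or.inl ⟨hc, if_pos hc⟩
      · exact Or.inr ⟨by have := u.isLt; omega, if_neg hc⟩
    have hJle : ∀ u : Fin (ρ + 1),
        (if (u : ℕ) = ρ then 2 * ρ + 1 else 2 * (u : ℕ)) ≤ 2 * ρ + 1 := by
      intro u
      rcases hJfact u with ⟨_, e⟩ | ⟨h, e⟩ <;> omega
    have hinj : Function.Injective f := by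
      intro u u' h
      apply Fin.ext
      have h1 := hnz u
      have h2 : (f u) (pos ρ (if (u' : ℕ) = ρ then 2 * ρ + 1 else 2 * (u' : ℕ))) ≠ 0 := by
        rw [h]
        exact hnz u'
      rcases mem_elim (hS (hf1 u)) with hA | ⟨a, ha, hL⟩ | ⟨u'', hu1'', hu2'', a, ha, hC⟩ |
        ⟨u'', hu1'', hu2'', hT⟩ | hI
      · have s1 := supp_unitV (hA ▸ h1)
        have s2 := supp_unitV (hA ▸ h2)
        rw [pos_val (hJle u)] at s1
        rw [pos_val (hJle u')] at s2
        rcases hJfact u with ⟨e1, e2⟩ | ⟨e1, e2⟩ <;> rcases hJfact u' with ⟨e3, e4⟩ | ⟨e3, e4⟩ <;>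
          omega
      · have s1 := supp_L (hL ▸ h1)
        have s2 := supp_L (hL ▸ h2)
        rw [pos_val (hJle u)] at s1
        rw [pos_val (hJle u')] at s2
        rcases hJfact u with ⟨e1, e2⟩ | ⟨e1, e2⟩ <;> rcases hJfact u' with ⟨e3, e4⟩ | ⟨e3, e4⟩ <;>
          omega
      · have s1 := supp_C (hC ▸ h1)
        have s2 := supp_C (hC ▸ h2)
        rw [pos_val (hJle u)] at s1
        rw [pos_val (hJle u')] at s2
        rcases hJfact u with ⟨e1, e2⟩ | ⟨e1, e2⟩ <;> rcases hJfact u' with ⟨e3, e4⟩ | ⟨e3, e4⟩ <;>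
          omega
      · have s1 := supp_unitV (hT ▸ h1)
        have s2 := supp_unitV (hT ▸ h2)
        rw [pos_val (hJle u)] at s1
        rw [pos_val (hJle u')] at s2
        rcases hJfact u with ⟨e1, e2⟩ | ⟨e1, e2⟩ <;> rcases hJfact u' with ⟨e3, e4⟩ | ⟨e3, e4⟩ <;>
          omega
      · have s1 := supp_unitV (hI ▸ h1)
        have s2 := supp_unitV (hI ▸ h2)
        rw [pos_val (hJle u)] at s1
        rw [pos_val (hJle u')] at s2
        rcases hJfact u with ⟨e1, e2⟩ | ⟨e1, e2⟩ <;> rcases hJfact u' with ⟨e3, e4⟩ | ⟨e3, e4⟩ <;>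
          omega
    have himg : Finset.image f Finset.univ = t := by
      apply Finset.eq_of_subset_of_card_le
      · intro w hw
        obtain ⟨u, _, rfl⟩ := Finset.mem_image.mp hw
        exact hf1 u
      · rw [Finset.card_image_of_injective _ hinj, Finset.card_univ, Fintype.card_fin]
        exact hcard
    have hveqF : ∀ j : Fin (2 * ρ + 2),
        vInf F ρ j = ∑ u : Fin (ρ + 1), c (f u) * (f u) j := by
      intro j
      rw [hcoord, ← himg, Finset.sum_image (fun a _ b _ h => hinj h)]
    have hρlt : ρ < ρ + 1 := by omega
    have hvan : ∀ (u : Fin (ρ + 1)), u ≠ ⟨ρ, hρlt⟩ → ∀ j : ℕ, j = 2 * ρ ∨ j = 2 * ρ + 1 →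
        (f u) (pos ρ j) = 0 := by
      intro u hune j hj
      have hul : (u : ℕ) < ρ := by
        rcases hJfact u with ⟨e1, _⟩ | ⟨e1, _⟩
        · exact absurd (Fin.ext e1) hune
        · exact e1
      have hnzu : (f u) (pos ρ (2 * (u : ℕ))) ≠ 0 := by
        have h' := hnz u
        rwa [if_neg (by omega)] at h'
      by_contra hz
      rcases mem_elim (hS (hf1 u)) with hA | ⟨a, ha, hL⟩ | ⟨u'', hu1'', hu2'', a, ha, hC⟩ |
        ⟨u'', hu1'', hu2'', hT⟩ | hI
      · have s1 := supp_unitV (hA ▸ hz)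
        rw [pos_val (by omega)] at s1
        omega
      · have s1 := supp_L (hL ▸ hz)
        rw [pos_val (by omega)] at s1
        omega
      · have s1 := supp_C (hC ▸ hz)
        have s2 := supp_C (hC ▸ hnzu)
        rw [pos_val (by omega)] at s1
        rw [pos_val (by omega)] at s2
        omega
      · have s1 := supp_unitV (hT ▸ hz)
        have s2 := supp_unitV (hT ▸ hnzu)
        rw [pos_val (by omega)] at s1
        rw [pos_val (by omega)] at s2
        omega
      · have s2 := supp_unitV (hI ▸ hnzu)
        rw [pos_val (by omega)] at s2
        omega
    have heq2ρ : vInf F ρ (pos ρ (2 * ρ)) =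
        c (f ⟨ρ, hρlt⟩) * (f ⟨ρ, hρlt⟩) (pos ρ (2 * ρ)) := by
      rw [hveqF]
      apply Finset.sum_eq_single_of_mem (⟨ρ, hρlt⟩ : Fin (ρ + 1)) (Finset.mem_univ _)
      intro x _ hxne
      rw [hvan x hxne (2 * ρ) (Or.inl rfl), mul_zero]
    have heqTop : vInf F ρ (pos ρ (2 * ρ + 1)) =
        c (f ⟨ρ, hρlt⟩) * (f ⟨ρ, hρlt⟩) (pos ρ (2 * ρ + 1)) := by
      rw [hveqF]
      apply Finset.sum_eq_single_of_mem (⟨ρ, hρlt⟩ : Fin (ρ + 1)) (Finset.mem_univ _)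
      intro x _ hxne
      rw [hvan x hxne (2 * ρ + 1) (Or.inr rfl), mul_zero]
    rw [vInf_eval (by omega), if_neg (by omega), if_pos rfl] at heq2ρ
    rw [vInf_eval (by omega), if_pos rfl] at heqTop
    have hXnz : (f ⟨ρ, hρlt⟩) (pos ρ (2 * ρ + 1)) ≠ 0 := by
      have h' : (f ⟨ρ, hρlt⟩)
          (pos ρ (if (ρ : ℕ) = ρ then 2 * ρ + 1 else 2 * ρ)) ≠ 0 := hnz ⟨ρ, hρlt⟩
      rwa [if_pos rfl] at h'
    rcases mem_elim (hS (hf1 ⟨ρ, hρlt⟩)) with hA | ⟨a, ha, hL⟩ |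
      ⟨u'', hu1'', hu2'', a, ha, hC⟩ | ⟨u'', hu1'', hu2'', hT⟩ | hI
    · exfalso
      have s1 := supp_unitV (hA ▸ hXnz)
      rw [pos_val (by omega)] at s1
      omega
    · exfalso
      have s1 := supp_L (hL ▸ hXnz)
      rw [pos_val (by omega)] at s1
      omega
    · exfalso
      have s1 := supp_C (hC ▸ hXnz)
      rw [pos_val (by omega)] at s1
      have hu''ρ : u'' = ρ := by omega
      rw [hu''ρ] at hC hu1'' hu2''
      have hv2 : (f ⟨ρ, hρlt⟩) (pos ρ (2 * ρ)) = a := by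
        rw [hC]
        exact ptC_at2 hu1'' hu2'' a
      have hv3 : (f ⟨ρ, hρlt⟩) (pos ρ (2 * ρ + 1)) = a ^ 2 := by
        rw [hC]
        exact ptC_at3 hu1'' hu2'' a
      rw [hv2] at heq2ρ
      rw [hv3] at heqTop
      exact one_ne_zero (by linear_combination heqTop - a * heq2ρ)
    · exfalso
      have s1 := supp_unitV (hT ▸ hXnz)
      rw [pos_val (by omega)] at s1
      omega
    · exact hI ▸ hf1 ⟨ρ, hρlt⟩

/-! ### Counting -/

section Count
variable [Fintype F]

open Classical in
/-- Parametrization of the construction. -/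
noncomputable def Phi (F : Type) [Field F] (ρ : ℕ) (u : ℕ) (a : F) : Fin (2 * ρ + 2) → F :=
  if u = 0 then (if a = 0 then unitV F (2 * ρ + 2) 0 else ptL ρ a)
  else if u ≤ ρ then (if a = 0 then unitV F (2 * ρ + 2) (2 * u) else ptC ρ u a)
  else unitV F (2 * ρ + 2) (2 * ρ + 1)

lemma Phi_A0 : Phi F ρ 0 0 = unitV F (2 * ρ + 2) 0 := by
  rw [Phi, if_pos rfl, if_pos rfl]

lemma Phi_L {a : F} (ha : a ≠ 0) : Phi F ρ 0 a = ptL ρ a := by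
  rw [Phi, if_pos rfl, if_neg ha]

lemma Phi_T {u : ℕ} (h1 : 1 ≤ u) (h2 : u ≤ ρ) :
    Phi F ρ u 0 = unitV F (2 * ρ + 2) (2 * u) := by
  rw [Phi, if_neg (by omega), if_pos h2, if_pos rfl]

lemma Phi_C {u : ℕ} (h1 : 1 ≤ u) (h2 : u ≤ ρ) {a : F} (ha : a ≠ 0) :
    Phi F ρ u a = ptC ρ u a := by
  rw [Phi, if_neg (by omega), if_pos h2, if_neg ha]

lemma Phi_I (a : F) : Phi F ρ (ρ + 1) a = unitV F (2 * ρ + 2) (2 * ρ + 1) := by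
  rw [Phi, if_neg (by omega), if_neg (by omega)]

open Classical in
/-- The domain of the parametrization. -/
noncomputable def Dom (F : Type) [Field F] [Fintype F] (ρ : ℕ) : Finset (ℕ × F) :=
  (Finset.range (ρ + 1) ×ˢ Finset.univ) ∪ {(ρ + 1, 0)}

lemma mem_Dom {p : ℕ × F} : p ∈ Dom F ρ ↔ p.1 ≤ ρ ∨ p = (ρ + 1, 0) := by
  classical
  simp only [Dom, Finset.mem_union, Finset.mem_product, Finset.mem_range,
    Finset.mem_singleton, Finset.mem_univ, and_true]
  have : p.1 < ρ + 1 ↔ p.1 ≤ ρ := by omega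
  rw [this]

open Classical in
lemma Phi_image : constructionS F ρ = ↑((Dom F ρ).image (fun p => Phi F ρ p.1 p.2)) := by
  classical
  ext w
  simp only [Finset.coe_image, Set.mem_image, Finset.mem_coe]
  constructor
  · intro hw
    rcases mem_elim hw with hA | ⟨a, ha, hL⟩ | ⟨u, h1, h2, a, ha, hC⟩ | ⟨u, h1, h2, hT⟩ | hI
    · exact ⟨(0, 0), mem_Dom.mpr (Or.inl (by omega)), by rw [hA]; exact Phi_A0⟩
    · exact ⟨(0, a), mem_Dom.mpr (Or.inl (by omega)), by rw [hL]; exact Phi_L ha⟩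
    · exact ⟨(u, a), mem_Dom.mpr (Or.inl h2), by rw [hC]; exact Phi_C h1 h2 ha⟩
    · exact ⟨(u, 0), mem_Dom.mpr (Or.inl h2), by rw [hT]; exact Phi_T h1 h2⟩
    · exact ⟨(ρ + 1, 0), mem_Dom.mpr (Or.inr rfl), by rw [hI]; exact Phi_I 0⟩
  · rintro ⟨p, hp, rfl⟩
    obtain ⟨u, a⟩ := p
    rcases mem_Dom.mp hp with hp1 | hp1
    · simp only at hp1
      rcases Nat.eq_zero_or_pos u with h0 | h0
      · subst h0
        by_cases ha : a = 0
        · subst ha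
          rw [Phi_A0]
          exact mem_A0
        · show Phi F ρ 0 a ∈ constructionS F ρ
          rw [Phi_L ha]
          exact mem_L ha
      · by_cases ha : a = 0
        · subst ha
          show Phi F ρ u 0 ∈ constructionS F ρ
          rw [Phi_T h0 hp1]
          exact mem_T h0 hp1
        · show Phi F ρ u a ∈ constructionS F ρ
          rw [Phi_C h0 hp1 ha]
          exact mem_C h0 hp1 ha
    · rw [hp1]
      show Phi F ρ (ρ + 1) 0 ∈ constructionS F ρ
      rw [Phi_I]
      exact mem_I

lemma Phi_nonzero {u : ℕ} (hu : u ≤ ρ) (a : F) : Phi F ρ u a (pos ρ (2 * u)) ≠ 0 := by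
  classical
  rcases Nat.eq_zero_or_pos u with h0 | h0
  · subst h0
    by_cases ha : a = 0
    · subst ha
      rw [Phi_A0]
      rw [show (2 * (0 : ℕ)) = 0 from by omega, A0_at0]
      exact one_ne_zero
    · rw [Phi_L ha, show (2 * (0 : ℕ)) = 0 from by omega, ptL_at0]
      exact one_ne_zero
  · by_cases ha : a = 0
    · subst ha
      rw [Phi_T h0 hu, ptT_at2 h0 hu]
      exact one_ne_zero
    · rw [Phi_C h0 hu ha, ptC_at2 h0 hu]
      exact ha

open Classical in
lemma Phi_injOn : Set.InjOn (fun p : ℕ × F => Phi F ρ p.1 p.2) ↑(Dom F ρ) := by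
  classical
  intro p hp p' hp' heq
  obtain ⟨u, a⟩ := p
  obtain ⟨u', a'⟩ := p'
  rw [Finset.mem_coe, mem_Dom] at hp hp'
  simp only at hp hp' heq
  have topzero : ∀ w : ℕ, w ≤ ρ → ∀ b : F,
      Phi F ρ (ρ + 1) b (pos ρ (2 * w)) = 0 := by
    intro w hw b
    rw [Phi_I, unitV_apply, if_neg (by rw [pos_val (by omega)]; omega)]
  rcases hp with hp1 | hp1 <;> rcases hp' with hp1' | hp1'
  · have hS1 : Phi F ρ u a ∈ constructionS F ρ := by
      rw [Phi_image]
      refine Finset.mem_coe.mpr (Finset.mem_image.mpr ⟨(u, a), mem_Dom.mpr (Or.inl hp1), rfl⟩)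
    have hequ : u = u' := by
      apply level_unique hS1 hp1 hp1' (pos_val (by omega)) (pos_val (by omega))
        (Phi_nonzero hp1 a)
      rw [heq]
      exact Phi_nonzero hp1' a'
    subst hequ
    rcases Nat.eq_zero_or_pos u with h0 | h0
    · subst h0
      by_cases ha : a = 0 <;> by_cases ha' : a' = 0
      · rw [ha, ha']
      · exfalso
        rw [ha, Phi_A0, Phi_L ha'] at heq
        have := congrFun heq (pos ρ 1)
        rw [A0_at1, ptL_at1] at this
        exact ha' this.symm
      · exfalso
        rw [ha', Phi_L ha, Phi_A0] at heq
        have := congrFun heq (pos ρ 1)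
        rw [ptL_at1, A0_at1] at this
        exact ha this
      · rw [Phi_L ha, Phi_L ha'] at heq
        have := congrFun heq (pos ρ 1)
        rw [ptL_at1, ptL_at1] at this
        rw [this]
    · by_cases ha : a = 0 <;> by_cases ha' : a' = 0
      · rw [ha, ha']
      · exfalso
        rw [ha, Phi_T h0 hp1, Phi_C h0 hp1 ha'] at heq
        exact ptC_ne_ptT h0 hp1 a' heq.symm
      · exfalso
        rw [ha', Phi_C h0 hp1 ha, Phi_T h0 hp1] at heq
        exact ptC_ne_ptT h0 hp1 a heq
      · rw [Phi_C h0 hp1 ha, Phi_C h0 hp1 ha'] at heq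
        have := congrFun heq (pos ρ (2 * u))
        rw [ptC_at2 h0 hp1, ptC_at2 h0 hp1] at this
        rw [this]
  · exfalso
    rw [Prod.mk.injEq] at hp1'
    have hne := Phi_nonzero hp1 a
    rw [heq, hp1'.1, hp1'.2, topzero u hp1 0] at hne
    exact hne rfl
  · exfalso
    rw [Prod.mk.injEq] at hp1
    have hne := Phi_nonzero hp1' a'
    rw [← heq, hp1.1, hp1.2, topzero u' hp1' 0] at hne
    exact hne rfl
  · rw [Prod.mk.injEq] at hp1 hp1'
    rw [hp1.1, hp1.2, hp1'.1, hp1'.2]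

lemma count_S {q : ℕ} (hF : Fintype.card F = q) :
    (constructionS F ρ).ncard = (ρ + 1) * q + 1 := by
  classical
  rw [Phi_image, Set.ncard_coe_finset, Finset.card_image_of_injOn Phi_injOn]
  have hnm : ((ρ + 1, 0) : ℕ × F) ∉ Finset.range (ρ + 1) ×ˢ Finset.univ := by
    rw [Finset.mem_product, Finset.mem_range]
    simp
  have : Dom F ρ = insert ((ρ + 1, 0) : ℕ × F) (Finset.range (ρ + 1) ×ˢ Finset.univ) := by
    rw [Dom, Finset.union_comm, ← Finset.insert_eq]
  rw [this, Finset.card_insert_of_notMem hnm, Finset.card_product, Finset.card_range,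
    Finset.card_univ, hF]

end Count

end Stmt10Aux

open Stmt10Aux in
/-- for a prime power `q = 4` or `q ≥ 7` and any `ρ ≥ 0`, the set
`S_ρ` of Construction S is a minimal `ρ`-saturating set of size `(ρ+1)q + 1`
in `PG(2ρ+1, q)`. -/
theorem stmt10 (q ρ : ℕ) (F : Type) [Field F] [Fintype F] (hF : Fintype.card F = q)
    (hq : q = 4 ∨ 7 ≤ q) :
    IsMinimalSaturatingSet (constructionS F ρ) ρ
    ∧ (constructionS F ρ).ncard = (ρ + 1) * q + 1 := by
  classical
  refine ⟨⟨⟨sat_upper hF hq, fun k hk => sat_lower k (by omega)⟩, ?_⟩, count_S hF⟩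
  intro S' hsub hIsSat
  obtain ⟨P, hPS, hPS'⟩ := Set.exists_of_ssubset hsub
  have hsat' := hIsSat.1
  rcases mem_elim hPS with hA | ⟨a, ha, hL⟩ | ⟨u, h1, h2, a, ha, hC⟩ | ⟨u, h1, h2, hT⟩ | hI
  · have hv : vStar F ρ ≠ 0 := by
      intro hz
      have h' := congrFun hz (pos ρ 0)
      rw [vStar_even (by omega) (by omega)] at h'
      exact one_ne_zero (h'.trans (Pi.zero_apply _))
    obtain ⟨t, c, htS, hcard, hsum⟩ := hsat' _ hv
    obtain ⟨hA0, _⟩ := ess_AT (htS.trans hsub.subset) hcard hsum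
    exact hPS' (by rw [hA]; exact htS (Finset.mem_coe.mpr hA0))
  · have hv : vLine F ρ a ≠ 0 := by
      intro hz
      have h' := congrFun hz (pos ρ 0)
      rw [vLine_eval a (by omega), if_neg (by omega), if_pos (by omega)] at h'
      exact one_ne_zero (h'.trans (Pi.zero_apply _))
    obtain ⟨t, c, htS, hcard, hsum⟩ := hsat' _ hv
    have hLmem := ess_L ha (htS.trans hsub.subset) hcard hsum
    exact hPS' (by rw [hL]; exact htS (Finset.mem_coe.mpr hLmem))
  · have hv : vConic F ρ u a ≠ 0 := by
      intro hz
      have h' := congrFun hz (pos ρ (2 * u))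
      rw [vConic_eval u a (by omega), if_neg (by omega), if_pos rfl] at h'
      exact ha (h'.trans (Pi.zero_apply _))
    obtain ⟨t, c, htS, hcard, hsum⟩ := hsat' _ hv
    have hCmem := ess_C h1 h2 ha (htS.trans hsub.subset) hcard hsum
    exact hPS' (by rw [hC]; exact htS (Finset.mem_coe.mpr hCmem))
  · have hv : vStar F ρ ≠ 0 := by
      intro hz
      have h' := congrFun hz (pos ρ 0)
      rw [vStar_even (by omega) (by omega)] at h'
      exact one_ne_zero (h'.trans (Pi.zero_apply _))
    obtain ⟨t, c, htS, hcard, hsum⟩ := hsat' _ hv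
    obtain ⟨_, hTall⟩ := ess_AT (htS.trans hsub.subset) hcard hsum
    exact hPS' (by rw [hT]; exact htS (Finset.mem_coe.mpr (hTall u h1 h2)))
  · have hv : vInf F ρ ≠ 0 := by
      intro hz
      have h' := congrFun hz (pos ρ (2 * ρ + 1))
      rw [vInf_eval (by omega), if_pos rfl] at h'
      exact one_ne_zero (h'.trans (Pi.zero_apply _))
    obtain ⟨t, c, htS, hcard, hsum⟩ := hsat' _ hv
    have hImem := ess_I (htS.trans hsub.subset) hcard hsum
    exact hPS' (by rw [hI]; exact htS (Finset.mem_coe.mpr hImem))
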